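/- arXiv:1808.09182 — 8 statements merged into one kernel-verified Lean document; each statement's English description precedes it below -/
import Mathlib

section
/- For real numbers α, β, γ with α > 0, β > 0, α + γ > 0 and β - γ > 0, one has Γ(α)Γ(β) / (Γ(α+γ)Γ(β-γ)) = ∏_{n=0}^∞ (1 + γ/(n+α)) (1 - γ/(n+β)), where the infinite product converges. -/
open Real

open Filter Topology Finset

private lemma aux_lin (c : ℝ) (hc : 0 < c) (n : ℕ) : min c 1 * (n + 1) ≤ (n : ℝ) + c := by
  rcases le_total c 1 with h | h
  · rw [min_eq_left h]
    nlinarith [Nat.cast_nonneg (α := ℝ) n]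
  · rw [min_eq_right h]
    nlinarith [Nat.cast_nonneg (α := ℝ) n]

private lemma aux_summable (a b : ℝ) (ha : 0 < a) (hb : 0 < b) :
    Summable (fun n : ℕ => (((n : ℝ) + a) * ((n : ℝ) + b))⁻¹) := by
  have h2 : Summable (fun n : ℕ => (min a 1 * min b 1)⁻¹ * (((n : ℝ) + 1) ^ 2)⁻¹) := by
    apply Summable.mul_left
    have h := Real.summable_one_div_nat_pow.mpr (by norm_num : 1 < 2)
    have := (summable_nat_add_iff (f := fun n : ℕ => 1 / (n : ℝ) ^ 2) 1).mpr h
    simpa [one_div] using this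
  refine Summable.of_nonneg_of_le (fun n => by positivity) (fun n => ?_) h2
  have hma : (0:ℝ) < min a 1 := lt_min ha one_pos
  have hmb : (0:ℝ) < min b 1 := lt_min hb one_pos
  have h1 : min a 1 * ((n:ℝ) + 1) * (min b 1 * ((n:ℝ)+1)) ≤ ((n:ℝ) + a) * ((n:ℝ) + b) := by
    have := aux_lin a ha n
    have := aux_lin b hb n
    have hn : (0:ℝ) ≤ (n:ℝ) + 1 := by positivity
    nlinarith [mul_pos hma (show (0:ℝ) < (n:ℝ)+1 by positivity)]
  calc (((n : ℝ) + a) * ((n : ℝ) + b))⁻¹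
      ≤ (min a 1 * ((n:ℝ) + 1) * (min b 1 * ((n:ℝ)+1)))⁻¹ := by
        apply inv_anti₀ (by positivity) h1
    _ = (min a 1 * min b 1)⁻¹ * (((n : ℝ) + 1) ^ 2)⁻¹ := by
        rw [← mul_inv]; ring_nf

private lemma aux_abs_log_le {x : ℝ} (hx : 0 < x) : |Real.log x| ≤ |x - 1| + |x - 1| / x := by
  have h1 := Real.log_le_sub_one_of_pos hx
  have h2 := Real.log_le_sub_one_of_pos (inv_pos.mpr hx)
  rw [Real.log_inv] at h2
  have hd : (0:ℝ) ≤ |x - 1| / x := by positivity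
  rw [abs_le]
  constructor
  · have e : 1 - x⁻¹ = (x - 1) / x := by field_simp
    have h3 : (x - 1) / x ≤ Real.log x := by linarith [e ▸ (by linarith [h2] : 1 - x⁻¹ ≤ Real.log x)]
    have h4 : -(|x - 1| / x) ≤ (x - 1) / x := by
      rw [← neg_div]
      gcongr
      exact neg_abs_le _
    linarith [abs_nonneg (x - 1)]
  · linarith [le_abs_self (x - 1)]

theorem gamma_ratio_eq_tprod (α β γ : ℝ) (hα : 0 < α) (hβ : 0 < β)
    (hαγ : 0 < α + γ) (hβγ : 0 < β - γ) :
    Multipliable (fun n : ℕ => (1 + γ / (n + α)) * (1 - γ / (n + β))) ∧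
    Real.Gamma α * Real.Gamma β / (Real.Gamma (α + γ) * Real.Gamma (β - γ)) =
      ∏' n : ℕ, (1 + γ / (n + α)) * (1 - γ / (n + β)) := by
  set f : ℕ → ℝ := fun n : ℕ => (1 + γ / (n + α)) * (1 - γ / (n + β)) with hf
  set h1 : ℕ → ℝ := fun n : ℕ => (((n : ℝ) + α) * ((n : ℝ) + β))⁻¹ with hh1
  set h2 : ℕ → ℝ := fun n : ℕ => (((n : ℝ) + (α + γ)) * ((n : ℝ) + (β - γ)))⁻¹ with hh2
  set c : ℝ := γ * (β - α) - γ ^ 2 with hc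
  have hpos : ∀ n : ℕ, 0 < f n := by
    intro n
    have ha : (0:ℝ) < (n:ℝ) + α := by positivity
    have hb : (0:ℝ) < (n:ℝ) + β := by positivity
    have e1 : 1 + γ / ((n:ℝ) + α) = ((n:ℝ) + α + γ) / ((n:ℝ) + α) := by field_simp
    have e2 : 1 - γ / ((n:ℝ) + β) = ((n:ℝ) + β - γ) / ((n:ℝ) + β) := by field_simp
    rw [hf]
    simp only [e1, e2]
    have : (0:ℝ) < (n:ℝ) + α + γ := by linarith [Nat.cast_nonneg (α := ℝ) n]
    have : (0:ℝ) < (n:ℝ) + β - γ := by linarith [Nat.cast_nonneg (α := ℝ) n]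
    positivity
  have hfe : ∀ n : ℕ, f n - 1 = c * h1 n := by
    intro n
    have ha : ((n:ℝ) + α) ≠ 0 := by positivity
    have hb : ((n:ℝ) + β) ≠ 0 := by positivity
    rw [hf, hh1, hc]
    field_simp
    ring
  have hfh : ∀ n : ℕ, h1 n / f n = h2 n := by
    intro n
    have ha : (0:ℝ) < (n:ℝ) + α := by positivity
    have hb : (0:ℝ) < (n:ℝ) + β := by positivity
    have hag : (0:ℝ) < (n:ℝ) + (α + γ) := by linarith [Nat.cast_nonneg (α := ℝ) n]
    have hbg : (0:ℝ) < (n:ℝ) + (β - γ) := by linarith [Nat.cast_nonneg (α := ℝ) n]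
    rw [div_eq_iff (hpos n).ne']
    simp only [hf, hh1, hh2]
    field_simp
    ring
  -- summability of logs
  have hlog : Summable fun n : ℕ => Real.log (f n) := by
    have hs : Summable (fun n : ℕ => |c| * h1 n + |c| * h2 n) :=
      ((aux_summable α β hα hβ).mul_left |c|).add ((aux_summable (α+γ) (β-γ) hαγ hβγ).mul_left |c|)
    apply Summable.of_abs
    refine Summable.of_nonneg_of_le (fun n => abs_nonneg _) ?_ hs
    intro n
    have hb := aux_abs_log_le (hpos n)
    have e1 : |f n - 1| = |c| * h1 n := by
      rw [hfe n, abs_mul, abs_of_pos (show 0 < h1 n by rw [hh1]; positivity)]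
    have e2 : |f n - 1| / f n = |c| * h2 n := by
      rw [e1, mul_div_assoc, hfh n]
    linarith [hb, e1 ▸ le_refl (|f n - 1|)]
  have hprod : HasProd f (Real.exp (∑' n : ℕ, Real.log (f n))) :=
    (hlog.hasSum.rexp).congr_fun fun n => (Real.exp_log (hpos n)).symm
  have hm : Multipliable f := ⟨_, hprod⟩
  refine ⟨hm, ?_⟩
  -- partial products equal GammaSeq ratio
  have hkey : ∀ n : ℕ, 1 ≤ n →
      ∏ j ∈ Finset.range (n+1), f j =
        GammaSeq α n * GammaSeq β n / (GammaSeq (α+γ) n * GammaSeq (β-γ) n) := by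
    intro n hn
    have hn0 : (0:ℝ) < n := by exact_mod_cast hn
    have e : ∀ j ∈ Finset.range (n+1), f j =
        (((α+γ) + j) * ((β-γ) + j)) / ((α + j) * (β + j)) := by
      intro j _
      have ha : (0:ℝ) < (j:ℝ) + α := by positivity
      have hb : (0:ℝ) < (j:ℝ) + β := by positivity
      rw [hf]
      field_simp
      ring
    rw [Finset.prod_congr rfl e, Finset.prod_div_distrib, Finset.prod_mul_distrib,
      Finset.prod_mul_distrib]
    have hP : ∀ s : ℝ, 0 < s → 0 < ∏ j ∈ Finset.range (n+1), (s + (j:ℝ)) := by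
      intro s hs
      exact Finset.prod_pos fun j _ => by positivity
    have hPa := hP α hα
    have hPb := hP β hβ
    have hPag := hP (α+γ) hαγ
    have hPbg := hP (β-γ) hβγ
    have hfac : (0:ℝ) < ((Nat.factorial n : ℕ) : ℝ) := by exact_mod_cast (Nat.factorial_pos n)
    have hra : (0:ℝ) < (n:ℝ) ^ α := Real.rpow_pos_of_pos hn0 _
    have hrb : (0:ℝ) < (n:ℝ) ^ β := Real.rpow_pos_of_pos hn0 _
    have hrag : (0:ℝ) < (n:ℝ) ^ (α+γ) := Real.rpow_pos_of_pos hn0 _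
    have hrbg : (0:ℝ) < (n:ℝ) ^ (β-γ) := Real.rpow_pos_of_pos hn0 _
    have key : (n:ℝ) ^ (α+γ) * (n:ℝ) ^ (β-γ) = (n:ℝ) ^ α * (n:ℝ) ^ β := by
      rw [← Real.rpow_add hn0, ← Real.rpow_add hn0]
      ring_nf
    rw [Real.GammaSeq, Real.GammaSeq, Real.GammaSeq, Real.GammaSeq]
    rw [div_eq_div_iff (by positivity) (by positivity)]
    field_simp
    linear_combination key
  -- the limit
  have hΓag : Real.Gamma (α+γ) ≠ 0 := (Real.Gamma_pos_of_pos hαγ).ne'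
  have hΓbg : Real.Gamma (β-γ) ≠ 0 := (Real.Gamma_pos_of_pos hβγ).ne'
  have hG : Tendsto (fun n : ℕ => GammaSeq α n * GammaSeq β n /
      (GammaSeq (α+γ) n * GammaSeq (β-γ) n)) atTop
      (𝓝 (Real.Gamma α * Real.Gamma β / (Real.Gamma (α+γ) * Real.Gamma (β-γ)))) :=
    ((Real.GammaSeq_tendsto_Gamma α).mul (Real.GammaSeq_tendsto_Gamma β)).div
      ((Real.GammaSeq_tendsto_Gamma (α+γ)).mul (Real.GammaSeq_tendsto_Gamma (β-γ)))
      (mul_ne_zero hΓag hΓbg)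
  have hT1 : Tendsto (fun n : ℕ => ∏ j ∈ Finset.range (n+1), f j) atTop
      (𝓝 (Real.Gamma α * Real.Gamma β / (Real.Gamma (α+γ) * Real.Gamma (β-γ)))) := by
    refine hG.congr' ?_
    filter_upwards [eventually_ge_atTop 1] with n hn
    exact (hkey n hn).symm
  have hT : Tendsto (fun n : ℕ => ∏ j ∈ Finset.range n, f j) atTop
      (𝓝 (Real.Gamma α * Real.Gamma β / (Real.Gamma (α+γ) * Real.Gamma (β-γ)))) := by
    exact (tendsto_add_atTop_iff_nat 1).mp hT1
  exact tendsto_nhds_unique hT hm.hasProd.tendsto_prod_nat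
end

section
/- Let 0 < μ < 1 and τ ≥ 0 with μ + τ < 1. Then ∏_{n=0}^∞ [ (1 + τ/(n+μ)) (1 - τ/(n+1-μ)) ]^{-1} = sin(πμ) / sin(π(μ+τ)). -/
open Real Filter Finset Topology

lemma key_prod (x : ℝ) (N : ℕ) :
    ((N : ℝ) + x) * ∏ n ∈ Finset.range N, (((n : ℝ) + x) * ((n : ℝ) + 1 - x)) =
      x * ∏ n ∈ Finset.range N, (((n : ℝ) + 1) ^ 2 - x ^ 2) := by
  induction N with
  | zero => simp
  | succ N ih =>
    rw [Finset.prod_range_succ, Finset.prod_range_succ]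
    push_cast
    linear_combination (((N:ℝ)+1+x)*((N:ℝ)+1-x)) * ih

section main
variable (μ τ : ℝ) (hμ0 : 0 < μ) (hμ1 : μ < 1) (hτ : 0 ≤ τ) (hμτ : μ + τ < 1)

-- basic positivity
include hμ0 hμ1 hτ hμτ in
lemma parts_pos (n : ℕ) : 0 < (n:ℝ) + μ ∧ 0 < (n:ℝ) + 1 - μ ∧
    0 < (n:ℝ) + μ + τ ∧ 0 < (n:ℝ) + 1 - μ - τ := by
  have hn : (0:ℝ) ≤ n := Nat.cast_nonneg n
  refine ⟨by linarith, by linarith, by linarith, by linarith⟩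

include hμ0 hμ1 hτ hμτ in
lemma factor_eq (n : ℕ) :
    ((1 + τ / ((n:ℝ) + μ)) * (1 - τ / ((n:ℝ) + 1 - μ)))⁻¹ =
      (((n:ℝ) + μ) * ((n:ℝ) + 1 - μ)) / ((((n:ℝ) + (μ + τ)) * ((n:ℝ) + 1 - (μ + τ)))) := by
  obtain ⟨h1, h2, h3, h4⟩ := parts_pos μ τ hμ0 hμ1 hτ hμτ n
  have h3' : (n:ℝ) + (μ + τ) ≠ 0 := by linarith
  have h4' : (n:ℝ) + 1 - (μ + τ) ≠ 0 := by linarith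
  rw [show (1 + τ / ((n:ℝ) + μ)) = ((n:ℝ) + (μ + τ)) / ((n:ℝ) + μ) by field_simp; ring,
    show (1 - τ / ((n:ℝ) + 1 - μ)) = ((n:ℝ) + 1 - (μ + τ)) / ((n:ℝ) + 1 - μ) by
      field_simp; ring]
  rw [div_mul_div_comm, inv_div]

end main

theorem tprod_inv_eq_sin_ratio (μ τ : ℝ) (hμ0 : 0 < μ) (hμ1 : μ < 1)
    (hτ : 0 ≤ τ) (hμτ : μ + τ < 1) :
    ∏' n : ℕ, ((1 + τ / (n + μ)) * (1 - τ / (n + 1 - μ)))⁻¹ =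
      Real.sin (π * μ) / Real.sin (π * (μ + τ)) := by
  set μ' := μ + τ with hμ'
  have hμ'0 : 0 < μ' := by simp [hμ']; linarith
  have hμ'1 : μ' < 1 := hμτ
  set f : ℕ → ℝ := fun n => ((1 + τ / ((n:ℝ) + μ)) * (1 - τ / ((n:ℝ) + 1 - μ)))⁻¹ with hf
  have hfe : ∀ n : ℕ, f n = (((n:ℝ) + μ) * ((n:ℝ) + 1 - μ)) /
      ((((n:ℝ) + μ') * ((n:ℝ) + 1 - μ'))) := fun n => factor_eq μ τ hμ0 hμ1 hτ hμτ n
  -- positivity of f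
  have hfpos : ∀ n : ℕ, 0 < f n := by
    intro n
    obtain ⟨h1, h2, h3, h4⟩ := parts_pos μ τ hμ0 hμ1 hτ hμτ n
    rw [hfe n]
    have h3' : 0 < (n:ℝ) + μ' := by simp [hμ']; linarith
    have h4' : 0 < (n:ℝ) + 1 - μ' := by simp [hμ']; linarith
    positivity
  -- lower bound f n ≥ μ
  have hflb : ∀ n : ℕ, μ ≤ f n := by
    intro n
    obtain ⟨h1, h2, h3, h4⟩ := parts_pos μ τ hμ0 hμ1 hτ hμτ n
    have hn : (0:ℝ) ≤ n := Nat.cast_nonneg n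
    have h3' : 0 < (n:ℝ) + μ' := by simp only [hμ']; linarith
    have h4' : 0 < (n:ℝ) + 1 - μ' := by simp only [hμ']; linarith
    rw [hfe n, le_div_iff₀ (by positivity)]
    have e1 : μ * ((n:ℝ) + μ') ≤ (n:ℝ) + μ := by simp only [hμ']; nlinarith
    have e2 : μ * ((n:ℝ) + μ') * ((n:ℝ) + 1 - μ') ≤ ((n:ℝ) + μ) * ((n:ℝ) + 1 - μ') :=
      mul_le_mul_of_nonneg_right e1 (le_of_lt h4')
    have e3 : ((n:ℝ) + μ) * ((n:ℝ) + 1 - μ') ≤ ((n:ℝ) + μ) * ((n:ℝ) + 1 - μ) := by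
      apply mul_le_mul_of_nonneg_left _ (le_of_lt h1)
      simp only [hμ']; linarith
    nlinarith [e2, e3]
  -- bound |f n - 1|
  have hfdiff : ∀ n : ℕ, |f n - 1| ≤ (|τ * (2*μ - 1 + τ)| / (μ' * (1 - μ'))) * (1/((n:ℝ)+1)^2) := by
    intro n
    obtain ⟨h1, h2, h3, h4⟩ := parts_pos μ τ hμ0 hμ1 hτ hμτ n
    have h3' : 0 < (n:ℝ) + μ' := by simp only [hμ']; linarith
    have h4' : 0 < (n:ℝ) + 1 - μ' := by simp only [hμ']; linarith
    have hn : (0:ℝ) ≤ n := Nat.cast_nonneg n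
    have d1 : μ' * ((n:ℝ)+1) ≤ (n:ℝ) + μ' := by nlinarith
    have d2 : (1 - μ') * ((n:ℝ)+1) ≤ (n:ℝ) + 1 - μ' := by nlinarith
    have hden : μ' * (1 - μ') * ((n:ℝ)+1)^2 ≤ (((n:ℝ) + μ') * ((n:ℝ) + 1 - μ')) := by
      have := mul_le_mul d1 d2 (by nlinarith) (le_of_lt h3')
      nlinarith [this]
    have key : f n - 1 = (τ * (2*μ - 1 + τ)) / (((n:ℝ) + μ') * ((n:ℝ) + 1 - μ')) := by
      rw [hfe n]
      field_simp
      simp only [hμ']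
      ring
    rw [key, abs_div, abs_of_pos (mul_pos h3' h4'),
      show (|τ * (2*μ - 1 + τ)| / (μ' * (1 - μ'))) * (1/((n:ℝ)+1)^2)
          = |τ * (2*μ - 1 + τ)| / (μ' * (1 - μ') * ((n:ℝ)+1)^2) by
        rw [div_mul_div_comm, mul_one]]
    gcongr
  -- log bound
  have hμle : μ ≤ 1 := le_of_lt hμ1
  have hlog : ∀ n : ℕ, |Real.log (f n)| ≤ (1/μ) * |f n - 1| := by
    intro n
    have hp := hfpos n
    have hl := hflb n
    have hone : (1:ℝ) ≤ 1/μ := by rw [le_div_iff₀ hμ0]; linarith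
    rcases le_or_gt 1 (f n) with h | h
    · rw [abs_of_nonneg (Real.log_nonneg h), abs_of_nonneg (by linarith)]
      have h2 := Real.log_le_sub_one_of_pos hp
      nlinarith
    · have hlogle : -Real.log (f n) ≤ (f n)⁻¹ - 1 := by
        rw [← Real.log_inv]
        exact Real.log_le_sub_one_of_pos (inv_pos.mpr hp)
      rw [abs_of_nonpos (Real.log_nonpos (le_of_lt hp) (le_of_lt h)),
        abs_of_nonpos (by linarith)]
      have hinv : (f n)⁻¹ - 1 = (1 - f n) / f n := by field_simp
      have hdd : (1 - f n) / f n ≤ (1 - f n) / μ := by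
        have h9 : 0 ≤ 1 - f n := by linarith
        gcongr
      calc -Real.log (f n) ≤ (1 - f n) / f n := by rw [← hinv]; exact hlogle
        _ ≤ (1 - f n) / μ := hdd
        _ = (1/μ) * -(f n - 1) := by ring
  -- summability of logs
  have hs2 : Summable (fun n : ℕ => (1:ℝ)/((n:ℝ)+1)^2) := by
    have h0 : Summable (fun n : ℕ => (1:ℝ)/(n:ℝ)^2) :=
      Real.summable_one_div_nat_pow.mpr one_lt_two
    have h1 := (summable_nat_add_iff 1).mpr h0
    apply h1.congr
    intro n
    push_cast
    ring
  have hsumlog : Summable (fun n : ℕ => Real.log (f n)) := by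
    apply Summable.of_abs
    apply Summable.of_nonneg_of_le (fun n => abs_nonneg _)
      (fun n => (hlog n).trans (mul_le_mul_of_nonneg_left (hfdiff n) (by positivity)))
    exact ((hs2.mul_left _).mul_left _)
  have hm : Multipliable f :=
    Real.multipliable_of_summable_log hfpos hsumlog
  -- closed form of partial products
  have hform : ∀ N : ℕ, ∏ n ∈ Finset.range N, f n =
      ((π * μ * ∏ j ∈ Finset.range N, (1 - μ^2/((j:ℝ)+1)^2)) * (((N:ℝ)+μ'))) /
      ((π * μ' * ∏ j ∈ Finset.range N, (1 - μ'^2/((j:ℝ)+1)^2)) * (((N:ℝ)+μ))) := by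
    intro N
    have hNμ : 0 < (N:ℝ) + μ := by positivity
    have hNμ' : 0 < (N:ℝ) + μ' := by positivity
    have hA'pos : 0 < ∏ n ∈ Finset.range N, (((n:ℝ)+μ')*((n:ℝ)+1-μ')) := by
      apply Finset.prod_pos
      intro n _
      have hn : (0:ℝ) ≤ n := Nat.cast_nonneg n
      have : 0 < (n:ℝ) + μ' := by linarith
      have : 0 < (n:ℝ) + 1 - μ' := by linarith
      positivity
    have hQpos : 0 < ∏ n ∈ Finset.range N, ((n:ℝ)+1)^2 := by
      apply Finset.prod_pos; intro n _; positivity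
    have k1 := key_prod μ N
    have k2 := key_prod μ' N
    have hB'pos : 0 < ∏ n ∈ Finset.range N, (((n:ℝ)+1)^2 - μ'^2) := by
      have h : 0 < μ' * ∏ n ∈ Finset.range N, (((n:ℝ)+1)^2 - μ'^2) :=
        k2 ▸ mul_pos hNμ' hA'pos
      nlinarith [h, hμ'0]
    -- Euler factor rewriting
    have e1 : ∀ x : ℝ, (∏ j ∈ Finset.range N, (1 - x^2/((j:ℝ)+1)^2)) =
        (∏ n ∈ Finset.range N, (((n:ℝ)+1)^2 - x^2)) / (∏ n ∈ Finset.range N, ((n:ℝ)+1)^2) := by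
      intro x
      rw [← Finset.prod_div_distrib]
      apply Finset.prod_congr rfl
      intro j _
      have : ((j:ℝ)+1)^2 ≠ 0 := by positivity
      field_simp
    -- LHS as ratio of products
    have eL : ∏ n ∈ Finset.range N, f n =
        (∏ n ∈ Finset.range N, (((n:ℝ)+μ)*((n:ℝ)+1-μ))) /
        (∏ n ∈ Finset.range N, (((n:ℝ)+μ')*((n:ℝ)+1-μ'))) := by
      rw [← Finset.prod_div_distrib]
      exact Finset.prod_congr rfl (fun n _ => hfe n)
    have hπ : (π : ℝ) ≠ 0 := Real.pi_ne_zero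
    have hB'ne : (∏ n ∈ Finset.range N, (((n:ℝ)+1)^2 - μ'^2)) ≠ 0 := ne_of_gt hB'pos
    have hQne : (∏ n ∈ Finset.range N, ((n:ℝ)+1)^2) ≠ 0 := ne_of_gt hQpos
    have hA'ne : (∏ n ∈ Finset.range N, (((n:ℝ)+μ')*((n:ℝ)+1-μ'))) ≠ 0 := ne_of_gt hA'pos
    have hA : (∏ n ∈ Finset.range N, (((n:ℝ)+μ)*((n:ℝ)+1-μ))) =
        μ * (∏ n ∈ Finset.range N, (((n:ℝ)+1)^2 - μ^2)) / ((N:ℝ)+μ) := by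
      rw [eq_div_iff (ne_of_gt hNμ)]
      linear_combination k1
    have hA' : (∏ n ∈ Finset.range N, (((n:ℝ)+μ')*((n:ℝ)+1-μ'))) =
        μ' * (∏ n ∈ Finset.range N, (((n:ℝ)+1)^2 - μ'^2)) / ((N:ℝ)+μ') := by
      rw [eq_div_iff (ne_of_gt hNμ')]
      linear_combination k2
    rw [eL, hA, hA', e1 μ, e1 μ']
    have hμ'ne : μ' ≠ 0 := ne_of_gt hμ'0
    have hNμne : ((N:ℝ)+μ) ≠ 0 := ne_of_gt hNμ
    have hNμ'ne : ((N:ℝ)+μ') ≠ 0 := ne_of_gt hNμ'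
    field_simp
  -- the limits
  have hE := Real.tendsto_euler_sin_prod μ
  have hE' := Real.tendsto_euler_sin_prod μ'
  have hsin' : Real.sin (π * μ') ≠ 0 := by
    apply ne_of_gt
    apply Real.sin_pos_of_pos_of_lt_pi (mul_pos Real.pi_pos hμ'0)
    nlinarith [Real.pi_pos]
  have hNfrac : Tendsto (fun N : ℕ => (((N:ℝ)+μ')/((N:ℝ)+μ))) atTop (𝓝 1) := by
    have h0 : Tendsto (fun N : ℕ => τ/((N:ℝ)+μ)) atTop (𝓝 0) :=
      Tendsto.div_atTop tendsto_const_nhds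
        (tendsto_atTop_add_const_right _ μ tendsto_natCast_atTop_atTop)
    have h1 : Tendsto (fun N : ℕ => 1 + τ/((N:ℝ)+μ)) atTop (𝓝 1) := by
      simpa using h0.const_add 1
    apply h1.congr
    intro N
    have hNμ : ((N:ℝ) + μ) ≠ 0 := by positivity
    field_simp [hμ']
    ring
  have hT : Tendsto (fun N : ℕ => ∏ n ∈ Finset.range N, f n) atTop
      (𝓝 (Real.sin (π * μ) / Real.sin (π * μ'))) := by
    have h2 : Tendsto (fun N : ℕ =>
        ((π * μ * ∏ j ∈ Finset.range N, (1 - μ^2/((j:ℝ)+1)^2)) /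
          (π * μ' * ∏ j ∈ Finset.range N, (1 - μ'^2/((j:ℝ)+1)^2))) * (((N:ℝ)+μ')/((N:ℝ)+μ)))
        atTop (𝓝 ((Real.sin (π * μ) / Real.sin (π * μ')) * 1)) :=
      (hE.div hE' hsin').mul hNfrac
    rw [mul_one] at h2
    apply h2.congr
    intro N
    rw [div_mul_div_comm, ← hform N]
  exact tendsto_nhds_unique (HasProd.tendsto_prod_nat hm.hasProd) hT
end

section
/- For τ > 0, ∏_{n=1}^∞ (1 + 2τ/(n(n+1)))^{-1} = 2πτ / cosh(π √(2τ - 1/4)), where for 2τ < 1/4 the right-hand side is interpreted via cosh(π√(2τ-1/4)) = cos(π√(1/4-2τ)). -/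
open Real


open Finset

lemma cast_succ_ne (n : ℕ) : ((n : ℂ) + 1) ≠ 0 := by
  have := (Nat.cast_ne_zero (R := ℂ)).mpr (Nat.succ_ne_zero n)
  push_cast at this; exact this

lemma cast_succ2_ne (n : ℕ) : ((n : ℂ) + 2) ≠ 0 := by
  have := cast_succ_ne (n + 1); push_cast at this
  intro h; apply this; rw [← h]; ring

lemma prod_cast_succ (N : ℕ) : ∏ n ∈ Finset.range N, ((n : ℂ) + 1) = (N.factorial : ℂ) := by
  rw [← Finset.prod_range_add_one_eq_factorial]
  push_cast
  rfl

lemma prod_cast_succ2 (N : ℕ) :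
    ∏ n ∈ Finset.range N, ((n : ℂ) + 2) = ((N + 1).factorial : ℂ) := by
  have h := Finset.prod_range_succ' (fun j : ℕ => (j : ℂ) + 1) N
  rw [prod_cast_succ (N + 1)] at h
  simp only [Nat.cast_add, Nat.cast_one, Nat.cast_zero] at h
  rw [h]; ring_nf

lemma key_prod_s2 (τ : ℝ) (a b : ℂ) (hb : b = 1 - a) (hab : a * b = 2 * τ)
    (haj : ∀ j : ℕ, a + j ≠ 0) (hbj : ∀ j : ℕ, b + j ≠ 0) (N : ℕ) (hN : N ≠ 0) :
    (∏ n ∈ Finset.range N, ((1 : ℂ) + 2 * τ / ((n + 1) * (n + 2))))⁻¹ =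
      ((N : ℂ) + 1) / N * (2 * τ * (Complex.GammaSeq a N * Complex.GammaSeq b N)) := by
  have ha0 : a ≠ 0 := by simpa using haj 0
  have hb0 : b ≠ 0 := by simpa using hbj 0
  have hterm : ∀ n : ℕ, (1 : ℂ) + 2 * τ / ((n + 1) * (n + 2)) =
      ((a + (n + 1)) * (b + (n + 1))) / (((n : ℂ) + 1) * ((n : ℂ) + 2)) := by
    intro n
    have h1 := cast_succ_ne n
    have h2 := cast_succ2_ne n
    field_simp
    linear_combination -hab - ((n : ℂ) + 1) * hb
  have hu : (∏ n ∈ Finset.range N, (a + ((n : ℂ) + 1))) * a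
      = ∏ j ∈ Finset.range (N + 1), (a + (j : ℂ)) := by
    have h := Finset.prod_range_succ' (fun j : ℕ => a + (j : ℂ)) N
    simp only [Nat.cast_zero, add_zero, Nat.cast_add, Nat.cast_one] at h
    rw [h]
  have hv : (∏ n ∈ Finset.range N, (b + ((n : ℂ) + 1))) * b
      = ∏ j ∈ Finset.range (N + 1), (b + (j : ℂ)) := by
    have h := Finset.prod_range_succ' (fun j : ℕ => b + (j : ℂ)) N
    simp only [Nat.cast_zero, add_zero, Nat.cast_add, Nat.cast_one] at h
    rw [h]
  have hA : (∏ n ∈ Finset.range N, (a + ((n : ℂ) + 1))) ≠ 0 :=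
    Finset.prod_ne_zero_iff.mpr fun x _ => by
      have := haj (x + 1); push_cast at this; exact this
  have hB : (∏ n ∈ Finset.range N, (b + ((n : ℂ) + 1))) ≠ 0 :=
    Finset.prod_ne_zero_iff.mpr fun x _ => by
      have := hbj (x + 1); push_cast at this; exact this
  have hNc : (N : ℂ) ≠ 0 := Nat.cast_ne_zero.mpr hN
  have hNab : (N : ℂ) ^ a * (N : ℂ) ^ b = (N : ℂ) := by
    rw [← Complex.cpow_add _ _ hNc, hb]
    ring_nf
    exact Complex.cpow_one _
  have hF : (N.factorial : ℂ) ≠ 0 := Nat.cast_ne_zero.mpr N.factorial_ne_zero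
  have hfs : ((N + 1).factorial : ℂ) = ((N : ℂ) + 1) * (N.factorial : ℂ) := by
    rw [Nat.factorial_succ]; push_cast; ring
  rw [Finset.prod_congr rfl fun n _ => hterm n, Finset.prod_div_distrib,
    Finset.prod_mul_distrib, Finset.prod_mul_distrib, prod_cast_succ, prod_cast_succ2,
    Complex.GammaSeq, Complex.GammaSeq, ← hab, ← hu, ← hv, hfs]
  field_simp
  linear_combination (-1 : ℂ) * hNab

open Filter Real Topology

theorem tprod_inv_eq_cosh_formula (τ : ℝ) (hτ : 0 < τ) :
    ((∏' n : ℕ, (1 + 2 * τ / ((n + 1) * (n + 2)))⁻¹ : ℝ) : ℂ) =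
      (2 * Real.pi * τ : ℂ) /
        Complex.cosh ((Real.pi : ℂ) * ((2 * τ - 1 / 4 : ℂ) ^ ((1 : ℂ) / 2))) := by
  set w : ℂ := (2 * (τ : ℂ) - 1 / 4) ^ ((1 : ℂ) / 2) with hw
  set a : ℂ := 1 / 2 + Complex.I * w with ha
  set b : ℂ := 1 - a with hb
  have hw2 : w ^ 2 = 2 * (τ : ℂ) - 1 / 4 := by
    by_cases ht : (2 * (τ : ℂ) - 1 / 4) = 0
    · rw [hw, ht, Complex.zero_cpow (by norm_num)]
      simpa using ht.symm
    · rw [hw, sq, ← Complex.cpow_add _ _ ht]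
      norm_num
  have hab : a * b = 2 * (τ : ℂ) := by
    rw [ha, hb]
    linear_combination (-(w ^ 2)) * Complex.I_sq + hw2
  have haj : ∀ j : ℕ, a + j ≠ 0 := by
    intro j h
    rw [ha] at h
    have hq : w ^ 2 = -((1 / 2 : ℂ) + j) ^ 2 := by
      linear_combination (-(Complex.I * w) + (1 / 2 + (j : ℂ))) * h + w ^ 2 * Complex.I_sq
    have hre : ((2 * τ - 1 / 4 : ℝ) : ℂ) = ((-(1 / 2 + (j : ℝ)) ^ 2 : ℝ) : ℂ) := by
      push_cast
      linear_combination -hw2 + hq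
    have := Complex.ofReal_inj.mp hre
    nlinarith [Nat.cast_nonneg (α := ℝ) j]
  have hbj : ∀ j : ℕ, b + j ≠ 0 := by
    intro j h
    rw [hb, ha] at h
    have hq : w ^ 2 = -((1 / 2 : ℂ) + j) ^ 2 := by
      linear_combination ((Complex.I * w) + (1 / 2 + (j : ℂ))) * h + w ^ 2 * Complex.I_sq
    have hre : ((2 * τ - 1 / 4 : ℝ) : ℂ) = ((-(1 / 2 + (j : ℝ)) ^ 2 : ℝ) : ℂ) := by
      push_cast
      linear_combination -hw2 + hq
    have := Complex.ofReal_inj.mp hre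
    nlinarith [Nat.cast_nonneg (α := ℝ) j]
  -- multipliability of the real product
  have hcpos : ∀ n : ℕ, (0 : ℝ) < 1 + 2 * τ / ((n + 1) * (n + 2)) := by
    intro n; positivity
  have hsum : Summable (fun n : ℕ => 2 * τ / (((n : ℝ) + 1) * ((n : ℝ) + 2))) := by
    have h1 : Summable (fun n : ℕ => 2 * τ * (1 / ((n : ℝ) + 1) ^ 2)) := by
      apply Summable.mul_left
      have := (Real.summable_one_div_nat_pow (p := 2)).mpr one_lt_two
      have h2 := (summable_nat_add_iff (f := fun n : ℕ => 1 / (n : ℝ) ^ 2) 1).mpr this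
      refine h2.congr fun n => by push_cast; ring
    refine Summable.of_nonneg_of_le (fun n => by positivity) (fun n => ?_) h1
    have hn0 : (0:ℝ) ≤ (n:ℝ) := Nat.cast_nonneg n
    rw [mul_one_div, div_le_div_iff₀ (by positivity) (by positivity)]
    nlinarith [hτ.le, mul_nonneg hn0 hτ.le]
  have hmult : Multipliable (fun n : ℕ => (1 + 2 * τ / (((n : ℝ) + 1) * ((n : ℝ) + 2)))⁻¹) := by
    refine Real.multipliable_of_summable_log (fun n => inv_pos.mpr (hcpos n)) ?_
    have hlog : Summable (fun n : ℕ => Real.log (1 + 2 * τ / (((n : ℝ) + 1) * ((n : ℝ) + 2)))) := by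
      refine Summable.of_nonneg_of_le (fun n => Real.log_nonneg (le_add_of_nonneg_right (by positivity))) (fun n => ?_) hsum
      have := Real.log_le_sub_one_of_pos (hcpos n)
      linarith
    refine hlog.neg.congr fun n => ?_
    rw [Real.log_inv]
  -- convergence of complex partial products to ofReal of the tprod
  have htr : Tendsto (fun N => ∏ n ∈ Finset.range N,
      ((1 : ℂ) + 2 * τ / ((n + 1) * (n + 2)))⁻¹) atTop
      (𝓝 ((∏' n : ℕ, (1 + 2 * τ / (((n : ℝ) + 1) * ((n : ℝ) + 2)))⁻¹ : ℝ) : ℂ)) := by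
    have h0 := hmult.hasProd.tendsto_prod_nat
    have h1 := (Complex.continuous_ofReal.tendsto _).comp h0
    refine h1.congr fun N => ?_
    simp only [Function.comp_apply]
    push_cast
    rfl
  -- convergence to the Gamma expression
  have hq : Tendsto (fun N : ℕ => ((N : ℂ) + 1) / N) atTop (𝓝 1) := by
    have h := (tendsto_natCast_div_add_atTop (1 : ℂ)).inv₀ one_ne_zero
    simpa [inv_div] using h
  have hlim : Tendsto (fun N => ∏ n ∈ Finset.range N,
      ((1 : ℂ) + 2 * τ / ((n + 1) * (n + 2)))⁻¹) atTop
      (𝓝 (1 * (2 * (τ : ℂ) * (Complex.Gamma a * Complex.Gamma b)))) := by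
    apply Tendsto.congr' _ (hq.mul (tendsto_const_nhds.mul
      ((Complex.GammaSeq_tendsto_Gamma a).mul (Complex.GammaSeq_tendsto_Gamma b))))
    filter_upwards [eventually_ne_atTop 0] with N hN
    rw [Finset.prod_inv_distrib]
    exact (key_prod_s2 τ a b hb hab haj hbj N hN).symm
  have heq := tendsto_nhds_unique htr hlim
  have hsin : Complex.sin (↑π * a) = Complex.cosh (↑π * w) := by
    have h2 : (↑π : ℂ) * a = ↑π / 2 + (↑π * w) * Complex.I := by rw [ha]; ring
    rw [h2, Complex.sin_add, Complex.sin_pi_div_two, Complex.cos_pi_div_two, Complex.cos_mul_I]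
    ring
  calc ((∏' n : ℕ, (1 + 2 * τ / (((n : ℝ) + 1) * ((n : ℝ) + 2)))⁻¹ : ℝ) : ℂ)
      = 1 * (2 * (τ : ℂ) * (Complex.Gamma a * Complex.Gamma b)) := heq
    _ = 2 * (τ : ℂ) * (↑π / Complex.sin (↑π * a)) := by
        rw [hb, Complex.Gamma_mul_Gamma_one_sub a]; ring
    _ = 2 * ↑π * ↑τ / Complex.cosh (↑π * w) := by rw [hsin]; ring
end

section
/- For all z ∈ ℂ, cosh(πz) = (1 + 4z²) ∏_{n=1}^∞ (1 + z²/(n + 1/2)²), and the infinite product converges. -/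
open Filter Finset Complex

noncomputable def FF (w : ℂ) (N : ℕ) : ℂ := ∏ j ∈ Finset.range N, (1 - w ^ 2 / ((j : ℂ) + 1 / 2) ^ 2)

-- nonzero half-integer
lemma half_ne (a : ℕ) : ((a : ℂ) + 1 / 2 : ℂ) ≠ 0 := by
  intro h
  have h2 : ((2 * (a : ℤ) + 1 : ℤ) : ℂ) = 0 := by push_cast; linear_combination 2 * h
  have h3 : (2 * (a : ℤ) + 1 : ℤ) = 0 := by exact_mod_cast h2
  omega

lemma sub_half_ne (a b : ℕ) : ((a : ℂ) - 1 / 2 - (b : ℂ) : ℂ) ≠ 0 := by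
  intro h
  have h2 : ((2 * (a : ℤ) - 2 * b - 1 : ℤ) : ℂ) = 0 := by push_cast; linear_combination 2 * h
  have h3 : (2 * (a : ℤ) - 2 * b - 1 : ℤ) = 0 := by exact_mod_cast h2
  omega

-- L1: product split
lemma prod_split (w : ℂ) (N : ℕ) :
    ∏ j ∈ Finset.range (2 * N), (1 - (2 * w) ^ 2 / ((j : ℂ) + 1) ^ 2) =
      (∏ j ∈ Finset.range N, (1 - w ^ 2 / ((j : ℂ) + 1) ^ 2)) * FF w N := by
  induction N with
  | zero => simp [FF]
  | succ N ih =>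
    have h2 : 2 * (N + 1) = (2 * N) + 1 + 1 := by ring
    rw [h2]
    simp only [FF, Finset.prod_range_succ] at ih ⊢
    rw [ih]
    have e1 : ((2 * N : ℕ) : ℂ) + 1 = 2 * ((N : ℂ) + 1 / 2) := by push_cast; ring
    have e2 : ((2 * N + 1 : ℕ) : ℂ) + 1 = 2 * ((N : ℂ) + 1) := by push_cast; ring
    rw [e1, e2, mul_pow, mul_pow, mul_pow,
      mul_div_mul_left _ _ (by norm_num : ((2:ℂ))^2 ≠ 0),
      mul_div_mul_left _ _ (by norm_num : ((2:ℂ))^2 ≠ 0)]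
    ring

-- L3: shift identity
lemma shift_id (m : ℕ) (N : ℕ) :
    FF ((m : ℂ) + 1) N * ((N : ℂ) - 1 / 2 - m) = -((N : ℂ) + 1 / 2 + m) * FF (m : ℂ) N := by
  induction N with
  | zero => simp [FF]; ring
  | succ N ih =>
    simp only [FF, Finset.prod_range_succ] at ih ⊢
    apply mul_right_cancel₀ (sub_half_ne N m)
    push_cast
    have h1 : ((N:ℂ)+1/2) ≠ 0 := half_ne N
    have hQ : (((N:ℂ)+1/2)^2) ≠ 0 := pow_ne_zero 2 h1
    have hD : ((N:ℂ)*2+1) ≠ 0 := by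
      intro h; apply half_ne N; linear_combination h / 2
    have hx : (1 - ((m:ℂ)+1)^2/((N:ℂ)+1/2)^2)
        = (((N:ℂ)+1/2)^2 - ((m:ℂ)+1)^2) / ((N:ℂ)+1/2)^2 := by field_simp
    have hy : (1 - ((m:ℂ))^2/((N:ℂ)+1/2)^2)
        = (((N:ℂ)+1/2)^2 - ((m:ℂ))^2) / ((N:ℂ)+1/2)^2 := by field_simp
    rw [hx, hy]
    linear_combination ((((N:ℂ)+1/2)^2 - ((m:ℂ)+1)^2) / ((N:ℂ)+1/2)^2 * ((N:ℂ)+1/2-(m:ℂ))) * ih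

-- const/N → 0 in ℂ
lemma const_div_nat_tendsto (c : ℂ) :
    Tendsto (fun N : ℕ => c / (N : ℂ)) atTop (nhds 0) := by
  rw [tendsto_zero_iff_norm_tendsto_zero]
  have : (fun N : ℕ => ‖c / (N : ℂ)‖) = fun N : ℕ => ‖c‖ / (N : ℝ) := by
    funext N
    rw [norm_div, Complex.norm_natCast]
  rw [this]
  exact tendsto_const_div_atTop_nhds_zero_nat _

-- L4: ratio tendsto
lemma ratio_tendsto (m : ℕ) :
    Tendsto (fun N : ℕ => -((N : ℂ) + 1 / 2 + m) / ((N : ℂ) - 1 / 2 - m)) atTop (nhds (-1)) := by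
  have h0 : Tendsto (fun N : ℕ => ((m : ℂ) + 1 / 2) / (N : ℂ)) atTop (nhds 0) :=
    const_div_nat_tendsto _
  have hnum : Tendsto (fun N : ℕ => -(1 + ((m : ℂ) + 1 / 2) / (N : ℂ))) atTop (nhds (-1)) := by
    have := (tendsto_const_nhds (x := (1 : ℂ)) (f := atTop)).add h0
    rw [add_zero] at this
    exact this.neg
  have hden : Tendsto (fun N : ℕ => 1 - ((m : ℂ) + 1 / 2) / (N : ℂ)) atTop (nhds 1) := by
    have := (tendsto_const_nhds (x := (1 : ℂ)) (f := atTop)).sub h0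
    rwa [sub_zero] at this
  have := hnum.div hden one_ne_zero
  rw [neg_div, div_one] at this
  apply this.congr'
  filter_upwards [eventually_ge_atTop 1] with N hN
  have hNne : ((N : ℂ)) ≠ 0 := by
    exact_mod_cast Nat.cast_ne_zero.mpr (by omega)
  have hd : ((N : ℂ) - 1 / 2 - m) ≠ 0 := sub_half_ne N m
  simp only [Pi.div_apply]
  rw [div_eq_div_iff _ hd]
  · field_simp
    ring
  · intro h
    apply hd
    have : (1 - ((m : ℂ) + 1 / 2) / (N : ℂ)) * N = (N : ℂ) - 1 / 2 - m := by
      field_simp; ring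
    rw [h, zero_mul] at this
    exact this.symm

open Real in
-- L5: integer case
lemma nat_tendsto (m : ℕ) :
    Tendsto (FF (m : ℂ)) atTop (nhds (Complex.cos ((π : ℂ) * m))) := by
  induction m with
  | zero =>
    simp only [Nat.cast_zero, mul_zero, Complex.cos_zero]
    have : FF (0 : ℂ) = fun _ => 1 := by
      funext N
      simp [FF]
    rw [this]
    exact tendsto_const_nhds
  | succ m ih =>
    have key : ∀ N : ℕ, FF ((m : ℂ) + 1) N =
        -((N : ℂ) + 1 / 2 + (m : ℂ)) / ((N : ℂ) - 1 / 2 - (m : ℂ)) * FF (m : ℂ) N := by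
      intro N
      rw [div_mul_eq_mul_div, eq_div_iff (sub_half_ne N m)]
      linear_combination shift_id m N
    have h1 : Tendsto (fun N : ℕ =>
          -((N : ℂ) + 1 / 2 + (m : ℂ)) / ((N : ℂ) - 1 / 2 - (m : ℂ)) * FF (m : ℂ) N)
        atTop (nhds ((-1) * Complex.cos ((π : ℂ) * m))) := (ratio_tendsto m).mul ih
    have h2 : ((-1 : ℂ)) * Complex.cos ((π : ℂ) * m) = Complex.cos ((π : ℂ) * ((m : ℂ) + 1)) := by
      rw [mul_add, mul_one, Complex.cos_add]
      simp [Complex.cos_pi, Complex.sin_pi]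
    rw [h2] at h1
    have hfe : FF (((m + 1 : ℕ) : ℂ)) = fun N : ℕ =>
        -((N : ℂ) + 1 / 2 + (m : ℂ)) / ((N : ℂ) - 1 / 2 - (m : ℂ)) * FF (m : ℂ) N := by
      funext N
      rw [show ((m + 1 : ℕ) : ℂ) = (m : ℂ) + 1 by push_cast; ring]
      exact key N
    rw [hfe, show ((m + 1 : ℕ) : ℂ) = (m : ℂ) + 1 from by push_cast; ring]
    exact h1

open Real in
-- L2: good case
lemma good_tendsto (w : ℂ) (hs : Complex.sin ((π : ℂ) * w) ≠ 0) :
    Tendsto (FF w) atTop (nhds (Complex.cos ((π : ℂ) * w))) := by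
  have T1 := Complex.tendsto_euler_sin_prod w
  have T2 := (Complex.tendsto_euler_sin_prod (2 * w)).comp
    (tendsto_id.const_mul_atTop' (zero_lt_two) : Tendsto (fun n : ℕ => 2 * n) atTop atTop)
  have T2' : Tendsto (fun N : ℕ =>
      2 * ((π : ℂ) * w * ∏ j ∈ Finset.range N, (1 - w ^ 2 / ((j : ℂ) + 1) ^ 2)) * FF w N)
      atTop (nhds (Complex.sin ((π : ℂ) * (2 * w)))) := by
    apply T2.congr
    intro N
    simp only [Function.comp_apply]
    rw [prod_split w N]
    ring
  have hu : Tendsto (fun N : ℕ =>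
      2 * ((π : ℂ) * w * ∏ j ∈ Finset.range N, (1 - w ^ 2 / ((j : ℂ) + 1) ^ 2)))
      atTop (nhds (2 * Complex.sin ((π : ℂ) * w))) := T1.const_mul 2
  have hne : (2 : ℂ) * Complex.sin ((π : ℂ) * w) ≠ 0 := mul_ne_zero two_ne_zero hs
  have hdiv := T2'.div hu hne
  have hval : Complex.sin ((π : ℂ) * (2 * w)) / (2 * Complex.sin ((π : ℂ) * w)) =
      Complex.cos ((π : ℂ) * w) := by
    rw [show (π : ℂ) * (2 * w) = 2 * ((π : ℂ) * w) by ring, Complex.sin_two_mul]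
    field_simp
  rw [hval] at hdiv
  apply hdiv.congr'
  have hev : ∀ᶠ N : ℕ in atTop,
      2 * ((π : ℂ) * w * ∏ j ∈ Finset.range N, (1 - w ^ 2 / ((j : ℂ) + 1) ^ 2)) ≠ 0 := by
    apply (hu.eventually_ne hne)
  filter_upwards [hev] with N hN
  simp only [Pi.div_apply]
  rw [mul_comm _ (FF w N), mul_div_assoc, div_self hN, mul_one]

open Real in
-- L6: all w
lemma all_tendsto (w : ℂ) :
    Tendsto (FF w) atTop (nhds (Complex.cos ((π : ℂ) * w))) := by
  by_cases hs : Complex.sin ((π : ℂ) * w) = 0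
  · rw [Complex.sin_eq_zero_iff] at hs
    obtain ⟨k, hk⟩ := hs
    have hpi : ((π : ℂ)) ≠ 0 := by
      exact_mod_cast Complex.ofReal_ne_zero.mpr Real.pi_ne_zero
    have hw : w = (k : ℂ) := by
      apply mul_left_cancel₀ hpi
      rw [hk]; ring
    rcases Int.natAbs_eq k with h | h
    · have : w = ((k.natAbs : ℕ) : ℂ) := by rw [hw, h]; exact Int.cast_natCast k.natAbs
      rw [this]
      exact nat_tendsto k.natAbs
    · have hwn : w = -((k.natAbs : ℕ) : ℂ) := by
        have h2 := congrArg (fun x : ℤ => (x : ℂ)) h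
        simp only [Int.cast_neg, Int.cast_natCast] at h2
        exact hw.trans h2
      have hFF : FF w = FF ((k.natAbs : ℕ) : ℂ) := by
        funext N
        simp only [FF, hwn]
        congr 1
        funext j
        ring
      have hcos : Complex.cos ((π : ℂ) * w) = Complex.cos ((π : ℂ) * (k.natAbs : ℂ)) := by
        rw [hwn, show (π : ℂ) * -((k.natAbs : ℕ) : ℂ) = -((π : ℂ) * (k.natAbs : ℂ)) by ring,
          Complex.cos_neg]
      rw [hFF, hcos]
      exact nat_tendsto k.natAbs
  · exact good_tendsto w hs

lemma hasProd_zero_of_exists_zero {f : ℕ → ℂ} (h : ∃ n, f n = 0) : HasProd f 0 := by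
  obtain ⟨n0, hn0⟩ := h
  rw [HasProd]
  apply Tendsto.congr' _ tendsto_const_nhds
  filter_upwards [eventually_ge_atTop ({n0} : Finset ℕ)] with s hs
  exact (Finset.prod_eq_zero (hs (Finset.mem_singleton_self n0)) hn0).symm

lemma norm_den (w : ℂ) (k n : ℕ) :
    ‖w ^ 2 / ((n : ℂ) + k + 1 / 2) ^ 2‖ = ‖w‖ ^ 2 / ((n : ℝ) + k + 1 / 2) ^ 2 := by
  have hc : ((n : ℂ) + k + 1 / 2) = (((n : ℝ) + k + 1 / 2 : ℝ) : ℂ) := by push_cast; ring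
  rw [norm_div, norm_pow, norm_pow, hc, Complex.norm_real,
    Real.norm_eq_abs, abs_of_pos (by positivity)]

lemma mult_aux (w : ℂ) (k : ℕ) :
    Multipliable (fun n : ℕ => 1 - w ^ 2 / ((n : ℂ) + k + 1 / 2) ^ 2) := by
  by_cases hz : ∃ n : ℕ, (1 : ℂ) - w ^ 2 / ((n : ℂ) + k + 1 / 2) ^ 2 = 0
  · exact ⟨0, hasProd_zero_of_exists_zero hz⟩
  push_neg at hz
  have hsum : Summable (fun n : ℕ => Complex.log (1 - w ^ 2 / ((n : ℂ) + k + 1 / 2) ^ 2)) := by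
    have hg : Summable (fun n : ℕ => 6 * ‖w‖ ^ 2 * (1 / ((n : ℝ) + 1) ^ 2)) := by
      apply Summable.mul_left
      have h2 := Real.summable_one_div_nat_pow.mpr (show 1 < 2 by norm_num)
      have h3 := (summable_nat_add_iff 1).mpr h2
      apply h3.congr
      intro n
      push_cast
      ring
    apply Summable.of_norm_bounded_eventually_nat hg
    filter_upwards [eventually_ge_atTop (max 1 ⌈2 * ‖w‖ ^ 2⌉₊)] with n hn
    have hn1 : (1 : ℝ) ≤ (n : ℝ) := by
      have := le_trans (le_max_left 1 ⌈2 * ‖w‖ ^ 2⌉₊) hn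
      exact_mod_cast this
    have hn2 : 2 * ‖w‖ ^ 2 ≤ (n : ℝ) :=
      Nat.ceil_le.mp (le_trans (le_max_right _ _) hn)
    have hk0 : (0 : ℝ) ≤ (k : ℝ) := Nat.cast_nonneg k
    have hdpos : (0 : ℝ) < ((n : ℝ) + k + 1 / 2) ^ 2 := by positivity
    have hp1 : (0 : ℝ) < ((n : ℝ) + 1) ^ 2 := by positivity
    have hle : ‖w‖ ^ 2 / ((n : ℝ) + k + 1 / 2) ^ 2 ≤ 1 / 2 := by
      rw [div_le_iff₀ hdpos]
      nlinarith [norm_nonneg w, hn1, hn2, hk0]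
    have harg : ‖-(w ^ 2 / ((n : ℂ) + k + 1 / 2) ^ 2)‖ ≤ 1 / 2 := by
      rw [norm_neg, norm_den]; exact hle
    have hlog : ‖Complex.log (1 - w ^ 2 / ((n : ℂ) + k + 1 / 2) ^ 2)‖ ≤
        3 / 2 * ‖-(w ^ 2 / ((n : ℂ) + k + 1 / 2) ^ 2)‖ := by
      rw [sub_eq_add_neg]
      exact Complex.norm_log_one_add_half_le_self harg
    refine hlog.trans ?_
    rw [norm_neg, norm_den]
    have h4 : ((n : ℝ) + 1) ^ 2 ≤ 4 * ((n : ℝ) + k + 1 / 2) ^ 2 := by nlinarith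
    rw [mul_div_assoc', mul_one_div, div_le_div_iff₀ hdpos hp1]
    nlinarith [mul_le_mul_of_nonneg_left h4 (by positivity : (0:ℝ) ≤ ‖w‖ ^ 2)]
  have := Complex.multipliable_of_summable_log hsum
  exact this

open Real in
lemma hasProd_cos (w : ℂ) :
    HasProd (fun n : ℕ => 1 - w ^ 2 / ((n : ℂ) + 1 / 2) ^ 2) (Complex.cos ((π : ℂ) * w)) := by
  have hM0 : Multipliable (fun n : ℕ => 1 - w ^ 2 / ((n : ℂ) + 1 / 2) ^ 2) := by
    have h := mult_aux w 0
    have he : (fun n : ℕ => 1 - w ^ 2 / ((n : ℂ) + (0 : ℕ) + 1 / 2) ^ 2) =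
        (fun n : ℕ => 1 - w ^ 2 / ((n : ℂ) + 1 / 2) ^ 2) := by
      funext n; norm_num
    rwa [he] at h
  have h1 := hM0.hasProd
  have h2 := h1.tendsto_prod_nat
  have h3 : Tendsto (FF w) atTop
      (nhds (∏' n : ℕ, (1 - w ^ 2 / ((n : ℂ) + 1 / 2) ^ 2))) := h2
  have h4 := tendsto_nhds_unique h3 (all_tendsto w)
  rwa [h4] at h1

theorem cosh_eq_tprod (z : ℂ) :
    Multipliable (fun n : ℕ => 1 + z ^ 2 / (((n : ℂ) + 1) + 1 / 2) ^ 2) ∧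
    Complex.cosh ((Real.pi : ℂ) * z) =
      (1 + 4 * z ^ 2) * ∏' n : ℕ, (1 + z ^ 2 / (((n : ℂ) + 1) + 1 / 2) ^ 2) := by
  set w : ℂ := z * Complex.I with hw
  have hw2 : w ^ 2 = -z ^ 2 := by rw [hw, mul_pow, Complex.I_sq]; ring
  have hshift : (fun n : ℕ => 1 - w ^ 2 / ((n : ℂ) + (1 : ℕ) + 1 / 2) ^ 2) =
      (fun n : ℕ => 1 + z ^ 2 / (((n : ℂ) + 1) + 1 / 2) ^ 2) := by
    funext n; rw [hw2]; push_cast; ring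
  have hMshift : Multipliable (fun n : ℕ => 1 + z ^ 2 / (((n : ℂ) + 1) + 1 / 2) ^ 2) := by
    have := mult_aux w 1
    rwa [hshift] at this
  refine ⟨hMshift, ?_⟩
  have hP := hasProd_cos w
  have hcos : Complex.cos ((Real.pi : ℂ) * w) = Complex.cosh ((Real.pi : ℂ) * z) := by
    rw [hw, show (Real.pi : ℂ) * (z * Complex.I) = ((Real.pi : ℂ) * z) * Complex.I by ring,
      Complex.cos_mul_I]
  set g : ℕ → ℂ := fun n : ℕ => 1 - w ^ 2 / ((n : ℂ) + 1 / 2) ^ 2 with hg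
  have hgshift : (fun n : ℕ => g (n + 1)) =
      (fun n : ℕ => 1 + z ^ 2 / (((n : ℂ) + 1) + 1 / 2) ^ 2) := by
    funext n; simp only [hg]; rw [hw2]; push_cast; ring
  have hMg1 : Multipliable (fun n : ℕ => g (n + 1)) := by rw [hgshift]; exact hMshift
  have key := Multipliable.prod_mul_tprod_nat_mul' (f := g) (k := 1) hMg1
  rw [Finset.prod_range_one] at key
  have hg0 : g 0 = 1 + 4 * z ^ 2 := by
    simp only [hg]; rw [hw2]; norm_num; ring
  have htp : ∏' i : ℕ, g i = Complex.cosh ((Real.pi : ℂ) * z) := by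
    rw [hP.tprod_eq, hcos]
  rw [← htp, ← key, hg0, hgshift]
end

section
/- The Fourier transform of the function x ↦ 1/(π cosh x) on ℝ is λ ↦ 1/cosh(λπ/2); that is, for all real λ, ∫_ℝ e^{iλx}/(π cosh x) dx = 1/cosh(λπ/2). In particular, x ↦ 1/(π cosh x) is a probability density on ℝ. -/
open Real MeasureTheory Set

noncomputable def sechSub (x : ℝ) : ℝ := (1 + Real.exp (-2 * x))⁻¹

lemma sechSub_hasDerivAt (x : ℝ) :
    HasDerivAt sechSub (2 * Real.exp (-2 * x) / (1 + Real.exp (-2 * x)) ^ 2) x := by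
  have h1 : HasDerivAt (fun x : ℝ => 1 + Real.exp (-2 * x)) (Real.exp (-2 * x) * (-2)) x := by
    have := (Real.hasDerivAt_exp (-2 * x)).comp x ((hasDerivAt_id x).const_mul (-2))
    simpa [mul_comm] using this.const_add 1
  have hne : (1 + Real.exp (-2 * x)) ≠ 0 := by positivity
  have := h1.inv hne
  exact this.congr_deriv (by ring)

lemma sechSub_strictMono : StrictMono sechSub := by
  intro x y hxy
  have h1 : Real.exp (-2 * y) < Real.exp (-2 * x) := by
    apply Real.exp_lt_exp.2; linarith
  have h2 : (0:ℝ) < 1 + Real.exp (-2 * y) := by positivity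
  exact inv_strictAnti₀ h2 (by linarith)

lemma sechSub_image : sechSub '' univ = Ioo (0:ℝ) 1 := by
  ext y
  simp only [image_univ, mem_range, mem_Ioo]
  constructor
  · rintro ⟨x, rfl⟩
    have h := Real.exp_pos (-2 * x)
    constructor
    · rw [sechSub]; positivity
    · rw [sechSub]
      rw [inv_lt_one_iff₀]
      right; linarith
  · rintro ⟨h0, h1⟩
    refine ⟨-Real.log ((1 - y) / y) / 2, ?_⟩
    have hy : y ≠ 0 := ne_of_gt h0
    have hq : (0:ℝ) < (1 - y) / y := div_pos (by linarith) h0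
    rw [sechSub]
    have : -2 * (-Real.log ((1 - y) / y) / 2) = Real.log ((1 - y) / y) := by ring
    rw [this, Real.exp_log hq]
    field_simp
    ring

lemma sechSub_eq (x : ℝ) : sechSub x = Real.exp x / (2 * Real.cosh x) := by
  have ha := Real.exp_pos x
  rw [sechSub, Real.cosh_eq, Real.exp_neg, show (-2:ℝ)*x = -(x+x) by ring, Real.exp_neg,
    Real.exp_add]
  field_simp

lemma one_sub_sechSub (x : ℝ) : 1 - sechSub x = Real.exp (-x) / (2 * Real.cosh x) := by
  have ha := Real.exp_pos x
  rw [sechSub, Real.cosh_eq, Real.exp_neg, show (-2:ℝ)*x = -(x+x) by ring, Real.exp_neg,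
    Real.exp_add]
  field_simp
  ring

lemma sechSub_deriv_eq (x : ℝ) :
    2 * Real.exp (-2 * x) / (1 + Real.exp (-2 * x)) ^ 2 = 1 / (2 * Real.cosh x ^ 2) := by
  have ha := Real.exp_pos x
  have hc := Real.cosh_pos x
  rw [Real.cosh_eq, Real.exp_neg, show (-2:ℝ)*x = -(x+x) by ring, Real.exp_neg, Real.exp_add]
  field_simp

lemma sech_pointwise (lam x : ℝ) :
    |2 * Real.exp (-2 * x) / (1 + Real.exp (-2 * x)) ^ 2| •
      (((sechSub x : ℝ) : ℂ) ^ ((1/2 : ℂ) + (lam/2) * Complex.I - 1) *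
       (1 - ((sechSub x : ℝ) : ℂ)) ^ (1 - ((1/2 : ℂ) + (lam/2) * Complex.I) - 1)) =
    Complex.exp (Complex.I * lam * x) / (Real.cosh x : ℂ) := by
  have hc := Real.cosh_pos x
  set c := Real.cosh x with hcdef
  have h2c : (0:ℝ) < 2*c := by linarith
  have hf : sechSub x = Real.exp x / (2*c) := sechSub_eq x
  have hf1 : 1 - sechSub x = Real.exp (-x) / (2*c) := one_sub_sechSub x
  have hfpos : 0 < sechSub x := by rw [hf]; positivity
  have hf1pos : 0 < 1 - sechSub x := by rw [hf1]; positivity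
  set L := Real.log (2*c) with hLdef
  have hlog1 : Real.log (sechSub x) = x - L := by
    rw [hf, Real.log_div (Real.exp_ne_zero x) h2c.ne', Real.log_exp]
  have hlog2 : Real.log (1 - sechSub x) = -x - L := by
    rw [hf1, Real.log_div (Real.exp_ne_zero _) h2c.ne', Real.log_exp]
  have hcp1 : ((sechSub x : ℝ) : ℂ) ^ ((1/2 : ℂ) + (lam/2) * Complex.I - 1)
      = Complex.exp ((↑(x - L) : ℂ) * ((1/2 : ℂ) + (lam/2) * Complex.I - 1)) := by
    rw [Complex.cpow_def_of_ne_zero (by exact_mod_cast hfpos.ne'),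
      ← Complex.ofReal_log hfpos.le, hlog1]
  have hcp2 : (1 - ((sechSub x : ℝ) : ℂ)) ^ (1 - ((1/2 : ℂ) + (lam/2) * Complex.I) - 1)
      = Complex.exp ((↑(-x - L) : ℂ) * (1 - ((1/2 : ℂ) + (lam/2) * Complex.I) - 1)) := by
    have h1 : (1 - ((sechSub x : ℝ) : ℂ)) = ((1 - sechSub x : ℝ) : ℂ) := by push_cast; ring
    rw [h1, Complex.cpow_def_of_ne_zero (by exact_mod_cast hf1pos.ne'),
      ← Complex.ofReal_log hf1pos.le, hlog2]
  rw [hcp1, hcp2, sechSub_deriv_eq x, ← Complex.exp_add]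
  have hAB : (↑(x - L) : ℂ) * ((1/2 : ℂ) + (lam/2) * Complex.I - 1)
      + (↑(-x - L) : ℂ) * (1 - ((1/2 : ℂ) + (lam/2) * Complex.I) - 1)
      = Complex.I * lam * x + (L : ℂ) := by push_cast; ring
  rw [hAB, Complex.exp_add]
  have hexpL : Complex.exp (L : ℂ) = ((2*c : ℝ) : ℂ) := by
    rw [← Complex.ofReal_exp, hLdef, Real.exp_log h2c]
  rw [hexpL, abs_of_pos (by positivity : (0:ℝ) < 1 / (2 * c ^ 2)), Complex.real_smul]
  have hcne : (c : ℂ) ≠ 0 := by exact_mod_cast hc.ne'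
  push_cast
  field_simp

lemma sech_key (lam : ℝ) :
    (∫ x : ℝ, Complex.exp (Complex.I * lam * x) / (Real.cosh x : ℂ)) =
      (Real.pi : ℂ) / (Real.cosh (lam * Real.pi / 2) : ℂ) := by
  set u : ℂ := (1/2 : ℂ) + (lam/2) * Complex.I with hu
  set g : ℝ → ℂ := fun y => (y:ℂ) ^ (u - 1) * (1 - (y:ℂ)) ^ ((1 - u) - 1) with hg
  have hure : 0 < u.re := by simp [hu]
  have hvre : 0 < (1-u).re := by simp [hu]; norm_num
  have himg := MeasureTheory.integral_image_eq_integral_abs_deriv_smul MeasurableSet.univ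
    (fun x _ => (sechSub_hasDerivAt x).hasDerivWithinAt) sechSub_strictMono.injective.injOn g
  rw [sechSub_image] at himg
  have h1 : (∫ x : ℝ, Complex.exp (Complex.I * lam * x) / (Real.cosh x : ℂ))
      = ∫ y in Ioo (0:ℝ) 1, g y := by
    rw [himg, MeasureTheory.setIntegral_univ]
    refine integral_congr_ae (Filter.Eventually.of_forall fun x => ?_)
    simp only [hg]
    exact (sech_pointwise lam x).symm
  have h2 : (∫ y in Ioo (0:ℝ) 1, g y) = Complex.betaIntegral u (1-u) := by
    rw [Complex.betaIntegral, intervalIntegral.integral_of_le zero_le_one,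
      MeasureTheory.integral_Ioc_eq_integral_Ioo]
  have hbeta : Complex.betaIntegral u (1-u) = (Real.pi : ℂ) / Complex.sin (Real.pi * u) := by
    have h := Complex.Gamma_mul_Gamma_eq_betaIntegral hure hvre
    rw [show u + (1-u) = 1 by ring, Complex.Gamma_one, one_mul] at h
    rw [← h, Complex.Gamma_mul_Gamma_one_sub]
  have hsin : Complex.sin ((Real.pi : ℂ) * u) = ((Real.cosh (lam * Real.pi / 2) : ℝ) : ℂ) := by
    have hrw : (Real.pi : ℂ) * u = (Real.pi : ℂ)/2 + ((lam * Real.pi / 2 : ℝ) : ℂ) * Complex.I := by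
      rw [hu]; push_cast; ring
    rw [hrw, Complex.sin_add, Complex.sin_pi_div_two, Complex.cos_pi_div_two,
      Complex.cos_mul_I, Complex.ofReal_cosh]
    ring
  rw [h1, h2, hbeta, hsin]

theorem fourier_sech (lam : ℝ) :
    (∫ x : ℝ, Complex.exp (Complex.I * lam * x) / (Real.pi * Real.cosh x)) =
      1 / (Real.cosh (lam * Real.pi / 2) : ℂ) ∧
    (∫ x : ℝ, 1 / (Real.pi * Real.cosh x)) = 1 ∧
    (∀ x : ℝ, 0 ≤ 1 / (Real.pi * Real.cosh x)) := by
  have hπ : (0:ℝ) < Real.pi := Real.pi_pos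
  have main : ∀ μ : ℝ,
      (∫ x : ℝ, Complex.exp (Complex.I * μ * x) / (Real.pi * Real.cosh x)) =
        1 / (Real.cosh (μ * Real.pi / 2) : ℂ) := by
    intro μ
    have hcosh : ((Real.cosh (μ * Real.pi / 2) : ℝ) : ℂ) ≠ 0 := by
      exact_mod_cast (Real.cosh_pos _).ne'
    have hπc : (Real.pi : ℂ) ≠ 0 := by exact_mod_cast hπ.ne'
    have hrw : ∀ x : ℝ, Complex.exp (Complex.I * μ * x) / ((Real.pi * Real.cosh x : ℝ) : ℂ)
        = (Complex.exp (Complex.I * μ * x) / (Real.cosh x : ℂ)) / (Real.pi : ℂ) := by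
      intro x
      push_cast
      rw [div_div]
      ring_nf
    calc (∫ x : ℝ, Complex.exp (Complex.I * μ * x) / (Real.pi * Real.cosh x))
        = ∫ x : ℝ, (Complex.exp (Complex.I * μ * x) / (Real.cosh x : ℂ)) / (Real.pi : ℂ) := by
          refine integral_congr_ae (Filter.Eventually.of_forall fun x => ?_)
          exact_mod_cast hrw x
      _ = (∫ x : ℝ, Complex.exp (Complex.I * μ * x) / (Real.cosh x : ℂ)) / (Real.pi : ℂ) :=
          integral_div _ _
      _ = 1 / (Real.cosh (μ * Real.pi / 2) : ℂ) := by
          rw [sech_key μ, div_div, mul_comm, ← div_div, div_self hπc]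
  refine ⟨main lam, ?_, ?_⟩
  · have h0 := main 0
    simp only [Complex.ofReal_zero, mul_zero, zero_mul, Complex.exp_zero, zero_div,
      Real.cosh_zero, Complex.ofReal_one, div_one] at h0
    have hofReal : ((∫ x : ℝ, 1 / (Real.pi * Real.cosh x) : ℝ) : ℂ)
        = ∫ x : ℝ, ((1 / (Real.pi * Real.cosh x) : ℝ) : ℂ) :=
      (integral_ofReal).symm
    have : ((∫ x : ℝ, 1 / (Real.pi * Real.cosh x) : ℝ) : ℂ) = 1 := by
      rw [hofReal, ← h0]
      refine integral_congr_ae (Filter.Eventually.of_forall fun x => ?_)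
      push_cast
      ring
    exact_mod_cast this
  · intro x
    have := Real.cosh_pos x
    positivity
end

section
/- For α ∈ (0,1), t > 0 and x ∈ ℝ, one has the Poisson-type summation identity (e^{-αx}/sin(απ)) ∑_{k∈ℤ} sinh(α(2kt+x)) e^{-2(kx+k²t)} = (√π e^{(x-αt)²/(2t)} / (√(2t) sin(απ))) ∑_{k∈ℤ} sin(kπα) sin(kπx/t) e^{-k²π²/(2t)}, both series being absolutely convergent. -/
open Real

lemma summable_gauss (A B : ℝ) (hA : 0 < A) :
    Summable (fun n : ℤ => Real.exp (-A * (n : ℝ) ^ 2 + B * |(n : ℝ)|)) := by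
  have h := summable_pow_mul_jacobiTheta₂_term_bound (B / (2 * π)) (T := A / π)
    (div_pos hA pi_pos) 0
  refine h.congr fun n => ?_
  rw [pow_zero, one_mul]
  congr 1
  field_simp
  push_cast
  ring

lemma tsum_int_eq_zero_of_odd {f : ℤ → ℝ} (hf : ∀ n, f (-n) = - f n) : ∑' n, f n = 0 := by
  have h := (Equiv.neg ℤ).tsum_eq f
  simp only [Equiv.neg_apply, hf, tsum_neg] at h
  linarith

lemma poisson_aux {t : ℝ} (ht : 0 < t) (c : ℝ) :
    (↑(∑' k : ℤ, Real.exp (-(2 * t) * ((k : ℝ) - c) ^ 2)) : ℂ)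
      = (Real.sqrt (π / (2 * t)) : ℂ) *
        ∑' n : ℤ, Complex.exp (-(π ^ 2 / (2 * t)) * (n : ℂ) ^ 2 + 2 * π * Complex.I * c * n) := by
  have h2t : (2 * t) ≠ 0 := by positivity
  have ha : (0 : ℝ) < π / (2 * t) := div_pos pi_pos (by positivity)
  have h := Complex.tsum_exp_neg_quadratic (a := Complex.ofReal (π / (2 * t)))
    (by rw [Complex.ofReal_re]; exact ha) (Complex.I * c)
  have hsqrt : (Complex.ofReal (π / (2 * t))) ^ (1 / 2 : ℂ) = (Real.sqrt (π / (2 * t)) : ℂ) := by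
    rw [show (1 / 2 : ℂ) = ((1 / 2 : ℝ) : ℂ) by norm_num, ← Complex.ofReal_cpow ha.le,
      Real.sqrt_eq_rpow]
  have key : ∀ n : ℤ, -(π : ℂ) / Complex.ofReal (π / (2 * t)) *
      ((n : ℂ) + Complex.I * (Complex.I * (c : ℂ))) ^ 2
      = Complex.ofReal (-(2 * t) * ((n : ℝ) - c) ^ 2) := by
    intro n
    have hIc : Complex.I * (Complex.I * (c : ℂ)) = -(c : ℂ) := by
      rw [← mul_assoc, Complex.I_mul_I]; ring
    have hpi : -(π : ℂ) / Complex.ofReal (π / (2 * t)) = Complex.ofReal (-(2 * t)) := by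
      rw [show -(π : ℂ) = Complex.ofReal (-π) by push_cast; ring, ← Complex.ofReal_div]
      congr 1
      field_simp
    rw [hIc, hpi]
    push_cast
    ring
  have h1 : (∑' n : ℤ, Complex.exp (-(π ^ 2 / (2 * t)) * (n : ℂ) ^ 2
        + 2 * π * Complex.I * c * n))
      = ∑' n : ℤ, Complex.exp (-(π : ℂ) * Complex.ofReal (π / (2 * t)) * (n : ℂ) ^ 2
        + 2 * π * (Complex.I * c) * n) :=
    tsum_congr fun n => by congr 1; push_cast; ring
  have h2 : (∑' n : ℤ, Complex.exp (-(π : ℂ) / Complex.ofReal (π / (2 * t)) *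
        ((n : ℂ) + Complex.I * (Complex.I * (c : ℂ))) ^ 2))
      = ↑(∑' k : ℤ, Real.exp (-(2 * t) * ((k : ℝ) - c) ^ 2)) := by
    rw [Complex.ofReal_tsum]
    exact tsum_congr fun n => by rw [key n, Complex.ofReal_exp]
  have hs0 : (Real.sqrt (π / (2 * t)) : ℂ) ≠ 0 := by
    exact_mod_cast (Real.sqrt_pos.mpr ha).ne'
  rw [h1, h, h2, hsqrt, ← mul_assoc, mul_one_div, div_self hs0, one_mul]

theorem phi_poisson_summation (α t x : ℝ) (hα0 : 0 < α) (hα1 : α < 1) (ht : 0 < t) :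
    Summable (fun k : ℤ =>
      |Real.sinh (α * (2 * k * t + x)) * Real.exp (-(2 * (k * x + k ^ 2 * t)))|) ∧
    Summable (fun k : ℤ =>
      |Real.sin (k * π * α) * Real.sin (k * π * x / t) * Real.exp (-(k ^ 2 * π ^ 2) / (2 * t))|) ∧
    Real.exp (-(α * x)) / Real.sin (α * π) *
        ∑' k : ℤ, Real.sinh (α * (2 * k * t + x)) * Real.exp (-(2 * (k * x + k ^ 2 * t))) =
      Real.sqrt π * Real.exp ((x - α * t) ^ 2 / (2 * t)) /
          (Real.sqrt (2 * t) * Real.sin (α * π)) *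
        ∑' k : ℤ, Real.sin (k * π * α) * Real.sin (k * π * x / t) *
          Real.exp (-(k ^ 2 * π ^ 2) / (2 * t)) := by
  have ht2 : (0 : ℝ) < 2 * t := by linarith
  have htne : t ≠ 0 := ht.ne'
  have htC : (t : ℂ) ≠ 0 := by exact_mod_cast htne
  have hππ : (0 : ℝ) < π ^ 2 / (2 * t) := by positivity
  -- |sinh y| ≤ exp |y|
  have hsinh : ∀ y : ℝ, |Real.sinh y| ≤ Real.exp |y| := by
    intro y
    rw [Real.abs_sinh, Real.sinh_eq]
    have := (Real.exp_pos (-|y|)).le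
    have := (Real.exp_pos |y|).le
    linarith
  -- Summability 1
  have hsum1 : Summable (fun k : ℤ =>
      |Real.sinh (α * (2 * k * t + x)) * Real.exp (-(2 * (k * x + k ^ 2 * t)))|) := by
    refine Summable.of_nonneg_of_le (fun k => abs_nonneg _) (fun k => ?_)
      ((summable_gauss (2 * t) (2 * α * t + 2 * |x|) ht2).mul_left (Real.exp (α * |x|)))
    rw [abs_mul, Real.abs_exp, ← Real.exp_add]
    calc |Real.sinh (α * (2 * k * t + x))| * Real.exp (-(2 * ((k : ℝ) * x + (k : ℝ) ^ 2 * t)))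
        ≤ Real.exp |α * (2 * k * t + x)| * Real.exp (-(2 * ((k : ℝ) * x + (k : ℝ) ^ 2 * t))) := by
          gcongr
          exact hsinh _
      _ = Real.exp (|α * (2 * k * t + x)| + -(2 * ((k : ℝ) * x + (k : ℝ) ^ 2 * t))) := by
          rw [Real.exp_add]
      _ ≤ Real.exp (α * |x| + (-(2 * t) * (k : ℝ) ^ 2 + (2 * α * t + 2 * |x|) * |(k : ℝ)|)) := by
          rw [Real.exp_le_exp]
          have h1 : |α * (2 * (k : ℝ) * t + x)| ≤ α * (2 * t * |(k : ℝ)| + |x|) := by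
            rw [abs_mul, abs_of_pos hα0]
            have : |2 * (k : ℝ) * t + x| ≤ 2 * t * |(k : ℝ)| + |x| := by
              calc |2 * (k : ℝ) * t + x| ≤ |2 * (k : ℝ) * t| + |x| := abs_add_le _ _
                _ = 2 * t * |(k : ℝ)| + |x| := by
                    rw [abs_mul, abs_mul]
                    rw [abs_of_nonneg (by norm_num : (0:ℝ) ≤ 2), abs_of_pos ht]
                    ring
            nlinarith [hα0.le]
          have h2 : -((k : ℝ) * x) ≤ |(k : ℝ)| * |x| := by
            rw [← abs_mul]; exact neg_le_abs _
          have h3 : |(k : ℝ)| ^ 2 = (k : ℝ) ^ 2 := sq_abs _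
          nlinarith
  -- Summability 2
  have hsum2 : Summable (fun k : ℤ =>
      |Real.sin (k * π * α) * Real.sin (k * π * x / t) * Real.exp (-(k ^ 2 * π ^ 2) / (2 * t))|) := by
    refine Summable.of_nonneg_of_le (fun k => abs_nonneg _) (fun k => ?_)
      (summable_gauss (π ^ 2 / (2 * t)) 0 hππ)
    rw [abs_mul, abs_mul, Real.abs_exp]
    have e1 : Real.exp (-((k : ℝ) ^ 2 * π ^ 2) / (2 * t))
        = Real.exp (-(π ^ 2 / (2 * t)) * (k : ℝ) ^ 2 + 0 * |(k : ℝ)|) := by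
      congr 1; field_simp; ring
    rw [e1]
    calc |Real.sin (k * π * α)| * |Real.sin (k * π * x / t)| *
          Real.exp (-(π ^ 2 / (2 * t)) * (k : ℝ) ^ 2 + 0 * |(k : ℝ)|)
        ≤ 1 * 1 * Real.exp (-(π ^ 2 / (2 * t)) * (k : ℝ) ^ 2 + 0 * |(k : ℝ)|) := by
          gcongr <;> exact Real.abs_sin_le_one _
      _ = _ := by ring
  -- Gaussian summability
  have hg : ∀ c : ℝ, Summable (fun k : ℤ => Real.exp (-(2 * t) * ((k : ℝ) - c) ^ 2)) := by
    intro c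
    refine Summable.of_nonneg_of_le (fun k => (Real.exp_pos _).le) (fun k => ?_)
      (summable_gauss (2 * t) (4 * t * |c|) ht2)
    rw [Real.exp_le_exp]
    have h1 : c * (k : ℝ) ≤ |c| * |(k : ℝ)| := by
      rw [← abs_mul]; exact le_abs_self _
    nlinarith [sq_nonneg c, ht.le]
  -- Fourier-side summability
  have hF : ∀ c : ℝ, Summable (fun n : ℤ =>
      Complex.exp (-(π ^ 2 / (2 * t)) * (n : ℂ) ^ 2 + 2 * π * Complex.I * (c : ℂ) * n)) := by
    intro c
    rw [← summable_norm_iff]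
    refine (summable_gauss (π ^ 2 / (2 * t)) 0 hππ).congr fun n => ?_
    have e1 : (-(π ^ 2 / (2 * t)) * (n : ℂ) ^ 2 + 2 * π * Complex.I * (c : ℂ) * n)
        = ((-(π ^ 2 / (2 * t)) * (n : ℝ) ^ 2 : ℝ) : ℂ) + ((2 * π * c * n : ℝ) : ℂ) * Complex.I := by
      push_cast; ring
    rw [e1, Complex.norm_exp, Complex.add_re, Complex.mul_I_re,
      Complex.ofReal_re, Complex.ofReal_im, neg_zero, add_zero]
    congr 1
    ring
  -- pointwise Fourier difference
  have hpt : ∀ n : ℤ,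
      Complex.exp (-(π ^ 2 / (2 * t)) * (n : ℂ) ^ 2
          + 2 * π * Complex.I * Complex.ofReal ((α * t - x) / (2 * t)) * n)
        - Complex.exp (-(π ^ 2 / (2 * t)) * (n : ℂ) ^ 2
          + 2 * π * Complex.I * Complex.ofReal (-((α * t + x) / (2 * t))) * n)
      = Complex.ofReal (2 * (Real.sin (n * π * α) * Real.sin (n * π * x / t) *
            Real.exp (-(n ^ 2 * π ^ 2) / (2 * t))))
        + Complex.I * Complex.ofReal (2 * (Real.sin (n * π * α) * Real.cos (n * π * x / t) *
            Real.exp (-(n ^ 2 * π ^ 2) / (2 * t)))) := by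
    intro n
    have e1 : (-(π ^ 2 / (2 * t)) * (n : ℂ) ^ 2
          + 2 * π * Complex.I * Complex.ofReal ((α * t - x) / (2 * t)) * n)
        = Complex.ofReal (-((n : ℝ) ^ 2 * π ^ 2) / (2 * t))
          + Complex.ofReal ((n : ℝ) * π * α - (n : ℝ) * π * x / t) * Complex.I := by
      push_cast
      field_simp
    have e2 : (-(π ^ 2 / (2 * t)) * (n : ℂ) ^ 2
          + 2 * π * Complex.I * Complex.ofReal (-((α * t + x) / (2 * t))) * n)
        = Complex.ofReal (-((n : ℝ) ^ 2 * π ^ 2) / (2 * t))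
          + Complex.ofReal (-((n : ℝ) * π * α + (n : ℝ) * π * x / t)) * Complex.I := by
      push_cast
      field_simp
    rw [e1, e2, Complex.exp_add, Complex.exp_add, Complex.exp_mul_I, Complex.exp_mul_I,
      ← Complex.ofReal_cos, ← Complex.ofReal_sin, ← Complex.ofReal_cos, ← Complex.ofReal_sin,
      ← Complex.ofReal_exp, Real.sin_neg, Real.cos_neg, Real.sin_sub, Real.cos_sub,
      Real.sin_add, Real.cos_add]
    push_cast
    ring
  -- summability of the two real sequences appearing in hpt
  have hsR : Summable (fun k : ℤ => Real.sin (k * π * α) * Real.sin (k * π * x / t) *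
      Real.exp (-(k ^ 2 * π ^ 2) / (2 * t))) := summable_abs_iff.mp hsum2
  have hsB : Summable (fun n : ℤ => 2 * (Real.sin (n * π * α) * Real.cos (n * π * x / t) *
      Real.exp (-(n ^ 2 * π ^ 2) / (2 * t)))) := by
    refine Summable.of_abs ?_
    refine Summable.of_nonneg_of_le (fun k => abs_nonneg _) (fun k => ?_)
      ((summable_gauss (π ^ 2 / (2 * t)) 0 hππ).mul_left 2)
    rw [abs_mul, abs_mul, abs_mul, Real.abs_exp]
    have e1 : Real.exp (-((k : ℝ) ^ 2 * π ^ 2) / (2 * t))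
        = Real.exp (-(π ^ 2 / (2 * t)) * (k : ℝ) ^ 2 + 0 * |(k : ℝ)|) := by
      congr 1; field_simp; ring
    rw [e1]
    have h2 : |(2 : ℝ)| = 2 := by norm_num
    rw [h2]
    calc 2 * (|Real.sin (k * π * α)| * |Real.cos (k * π * x / t)| *
          Real.exp (-(π ^ 2 / (2 * t)) * (k : ℝ) ^ 2 + 0 * |(k : ℝ)|))
        ≤ 2 * (1 * 1 * Real.exp (-(π ^ 2 / (2 * t)) * (k : ℝ) ^ 2 + 0 * |(k : ℝ)|)) := by
          gcongr
          · exact Real.abs_sin_le_one _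
          · exact Real.abs_cos_le_one _
      _ = _ := by ring
  have hodd : ∀ n : ℤ, 2 * (Real.sin (↑(-n) * π * α) * Real.cos (↑(-n) * π * x / t) *
      Real.exp (-(↑(-n) ^ 2 * π ^ 2) / (2 * t)))
      = -(2 * (Real.sin (n * π * α) * Real.cos (n * π * x / t) *
      Real.exp (-(n ^ 2 * π ^ 2) / (2 * t)))) := by
    intro n
    simp only [Int.cast_neg, neg_mul, neg_div, neg_sq, Real.sin_neg, Real.cos_neg]
    ring
  have hzero : (∑' n : ℤ, 2 * (Real.sin (n * π * α) * Real.cos (n * π * x / t) *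
      Real.exp (-(n ^ 2 * π ^ 2) / (2 * t)))) = 0 :=
    tsum_int_eq_zero_of_odd hodd
  -- the Fourier-side difference
  have hFd : (∑' n : ℤ, Complex.exp (-(π ^ 2 / (2 * t)) * (n : ℂ) ^ 2
          + 2 * π * Complex.I * Complex.ofReal ((α * t - x) / (2 * t)) * n))
        - (∑' n : ℤ, Complex.exp (-(π ^ 2 / (2 * t)) * (n : ℂ) ^ 2
          + 2 * π * Complex.I * Complex.ofReal (-((α * t + x) / (2 * t))) * n))
      = Complex.ofReal (2 * ∑' k : ℤ, Real.sin (k * π * α) * Real.sin (k * π * x / t) *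
          Real.exp (-(k ^ 2 * π ^ 2) / (2 * t))) := by
    rw [← Summable.tsum_sub (hF ((α * t - x) / (2 * t))) (hF (-((α * t + x) / (2 * t))))]
    rw [tsum_congr hpt]
    rw [Summable.tsum_add (Complex.summable_ofReal.mpr (hsR.mul_left 2))
      ((Complex.summable_ofReal.mpr hsB).mul_left Complex.I)]
    rw [tsum_mul_left, ← Complex.ofReal_tsum, ← Complex.ofReal_tsum,
      hzero, Complex.ofReal_zero, mul_zero, add_zero, tsum_mul_left]
  -- Poisson summation applied twice
  have hC : Complex.ofReal (∑' k : ℤ, Real.exp (-(2 * t) * ((k : ℝ) - (α * t - x) / (2 * t)) ^ 2))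
        - Complex.ofReal (∑' k : ℤ,
          Real.exp (-(2 * t) * ((k : ℝ) - -((α * t + x) / (2 * t))) ^ 2))
      = Complex.ofReal (Real.sqrt (π / (2 * t)) *
          (2 * ∑' k : ℤ, Real.sin (k * π * α) * Real.sin (k * π * x / t) *
            Real.exp (-(k ^ 2 * π ^ 2) / (2 * t)))) := by
    rw [poisson_aux ht ((α * t - x) / (2 * t)), poisson_aux ht (-((α * t + x) / (2 * t))),
      ← mul_sub, hFd, ← Complex.ofReal_mul]
  have hGr : (∑' k : ℤ, Real.exp (-(2 * t) * ((k : ℝ) - (α * t - x) / (2 * t)) ^ 2))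
        - (∑' k : ℤ, Real.exp (-(2 * t) * ((k : ℝ) - -((α * t + x) / (2 * t))) ^ 2))
      = Real.sqrt (π / (2 * t)) *
          (2 * ∑' k : ℤ, Real.sin (k * π * α) * Real.sin (k * π * x / t) *
            Real.exp (-(k ^ 2 * π ^ 2) / (2 * t))) := by exact_mod_cast hC
  -- left-hand side manipulation
  have hL : Real.exp (-(α * x)) *
        (∑' k : ℤ, Real.sinh (α * (2 * k * t + x)) * Real.exp (-(2 * (k * x + k ^ 2 * t))))
      = Real.exp ((x - α * t) ^ 2 / (2 * t)) / 2 *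
        ((∑' k : ℤ, Real.exp (-(2 * t) * ((k : ℝ) - (α * t - x) / (2 * t)) ^ 2))
          - (∑' k : ℤ, Real.exp (-(2 * t) * ((k : ℝ) - -((α * t + x) / (2 * t))) ^ 2))) := by
    rw [← Summable.tsum_sub (hg ((α * t - x) / (2 * t))) (hg (-((α * t + x) / (2 * t)))),
      ← tsum_mul_left, ← tsum_mul_left]
    refine tsum_congr fun k => ?_
    rw [Real.sinh_eq]
    have h1 : Real.exp (-(α * x)) * Real.exp (α * (2 * k * t + x)) *
          Real.exp (-(2 * (k * x + k ^ 2 * t)))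
        = Real.exp ((x - α * t) ^ 2 / (2 * t)) *
          Real.exp (-(2 * t) * ((k : ℝ) - (α * t - x) / (2 * t)) ^ 2) := by
      rw [← Real.exp_add, ← Real.exp_add, ← Real.exp_add]
      congr 1
      field_simp
      ring
    have h2 : Real.exp (-(α * x)) * Real.exp (-(α * (2 * k * t + x))) *
          Real.exp (-(2 * (k * x + k ^ 2 * t)))
        = Real.exp ((x - α * t) ^ 2 / (2 * t)) *
          Real.exp (-(2 * t) * ((k : ℝ) - -((α * t + x) / (2 * t))) ^ 2) := by
      rw [← Real.exp_add, ← Real.exp_add, ← Real.exp_add]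
      congr 1
      field_simp
      ring
    linear_combination (h1 - h2) / 2
  have hsqrtdiv : Real.sqrt (π / (2 * t)) = Real.sqrt π / Real.sqrt (2 * t) :=
    Real.sqrt_div pi_pos.le _
  have key : Real.exp (-(α * x)) *
        (∑' k : ℤ, Real.sinh (α * (2 * k * t + x)) * Real.exp (-(2 * (k * x + k ^ 2 * t))))
      = Real.sqrt π / Real.sqrt (2 * t) * Real.exp ((x - α * t) ^ 2 / (2 * t)) *
        ∑' k : ℤ, Real.sin (k * π * α) * Real.sin (k * π * x / t) *
          Real.exp (-(k ^ 2 * π ^ 2) / (2 * t)) := by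
    rw [hL, hGr, hsqrtdiv]
    ring
  exact ⟨hsum1, hsum2, by linear_combination key / Real.sin (α * π)⟩
end

section
/- Let π : [0,T] → ℝ be Lipschitz with constant L and π(0) = 0. Then the Pitman transform P₁π(t) = π(t) - 2 inf_{0≤s≤t} π(s) is Lipschitz with constant L, and P₀π(t) = π(t) + 2 inf_{0≤s≤t}(s - π(s)) is Lipschitz with constant L + 2. -/
open Set

lemma aux_pitman_lip (T : ℝ) (hT : 0 ≤ T) (K : NNReal) (g : ℝ → ℝ)
    (hg : LipschitzOnWith K g (Set.Icc 0 T)) :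
    LipschitzOnWith K (fun t => g t - 2 * sInf (g '' Set.Icc 0 t)) (Set.Icc 0 T) := by
  have hcont : ContinuousOn g (Set.Icc 0 T) := hg.continuousOn
  have hg' := (lipschitzOnWith_iff_dist_le_mul).1 hg
  rw [lipschitzOnWith_iff_dist_le_mul]
  -- facts about m
  have hcomp : ∀ t ∈ Set.Icc (0:ℝ) T, IsCompact (g '' Set.Icc 0 t) := fun t ht =>
    isCompact_Icc.image_of_continuousOn (hcont.mono (Set.Icc_subset_Icc_right ht.2))
  have hne : ∀ t ∈ Set.Icc (0:ℝ) T, (g '' Set.Icc 0 t).Nonempty := fun t ht =>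
    (Set.nonempty_Icc.2 ht.1).image g
  have hmem : ∀ t ∈ Set.Icc (0:ℝ) T, sInf (g '' Set.Icc 0 t) ∈ g '' Set.Icc 0 t :=
    fun t ht => (hcomp t ht).sInf_mem (hne t ht)
  have hle : ∀ t ∈ Set.Icc (0:ℝ) T, sInf (g '' Set.Icc 0 t) ≤ g t := by
    intro t ht
    exact csInf_le (hcomp t ht).bddBelow ⟨t, ⟨ht.1, le_refl _⟩, rfl⟩
  have hmono : ∀ s t, 0 ≤ s → s ≤ t → t ≤ T →
      sInf (g '' Set.Icc 0 t) ≤ sInf (g '' Set.Icc 0 s) := by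
    intro s t hs hst htT
    exact csInf_le_csInf (hcomp t ⟨hs.trans hst, htT⟩).bddBelow
      (hne s ⟨hs, hst.trans htT⟩)
      (Set.image_mono (Set.Icc_subset_Icc_right hst))
  intro x hx y hy
  wlog hxy : y ≤ x generalizing x y
  · rw [dist_comm, dist_comm x y]; exact this y hy x hx (le_of_not_ge hxy)
  simp only [Real.dist_eq]
  rw [abs_of_nonneg (by linarith : (0:ℝ) ≤ x - y)]
  set mx := sInf (g '' Set.Icc 0 x) with hmx
  set my := sInf (g '' Set.Icc 0 y) with hmy
  have hmxy : mx ≤ my := hmono y x hy.1 hxy hx.2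
  have hyg : my ≤ g y := hle y hy
  have hgxy : |g x - g y| ≤ K * (x - y) := by
    have := hg' x hx y hy
    rwa [Real.dist_eq, Real.dist_eq, abs_of_nonneg (by linarith : (0:ℝ) ≤ x - y)] at this
  rw [abs_le]
  constructor
  · -- lower bound
    have : -(K * (x - y)) ≤ g x - g y := by
      have := neg_abs_le (g x - g y); linarith
    have h2 : 0 ≤ my - mx := by linarith
    linarith
  · -- upper bound
    obtain ⟨u, hu, hgu⟩ := hmem x hx
    rcases le_or_gt u y with huy | huy
    · -- inf attained before y : mx = my
      have : my ≤ mx := by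
        rw [hmx, ← hgu]
        exact csInf_le (hcomp y hy).bddBelow ⟨u, ⟨hu.1, huy⟩, rfl⟩
      have hmxy' : mx = my := le_antisymm hmxy this
      have : g x - g y ≤ K * (x - y) := (abs_le.1 hgxy).2
      linarith
    · -- u ∈ [y, x]
      have huT : u ∈ Set.Icc (0:ℝ) T := ⟨hu.1, hu.2.trans hx.2⟩
      have h1 : g x - g u ≤ K * (x - u) := by
        have := hg' x hx u huT
        rw [Real.dist_eq, Real.dist_eq, abs_of_nonneg (by linarith [hu.2] : (0:ℝ) ≤ x - u)] at this
        linarith [(abs_le.1 this).2]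
      have h2 : g y - g u ≤ K * (u - y) := by
        have := hg' u huT y hy
        rw [Real.dist_eq, Real.dist_eq,
          abs_of_nonneg (by linarith : (0:ℝ) ≤ u - y)] at this
        linarith [(abs_le.1 (abs_sub_comm (g u) (g y) ▸ this)).2]
      have hgux : g u = mx := hgu
      nlinarith [h1, h2, hyg]

theorem pitman_transforms_lipschitz (T : ℝ) (hT : 0 ≤ T) (L : NNReal)
    (f : ℝ → ℝ) (h0 : f 0 = 0) (hf : LipschitzOnWith L f (Set.Icc 0 T)) :
    LipschitzOnWith L (fun t => f t - 2 * sInf (f '' Set.Icc 0 t)) (Set.Icc 0 T) ∧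
    LipschitzOnWith (L + 2)
      (fun t => f t + 2 * sInf ((fun s => s - f s) '' Set.Icc 0 t)) (Set.Icc 0 T) := by
  refine ⟨aux_pitman_lip T hT L f hf, ?_⟩
  set g : ℝ → ℝ := fun s => s - f s with hgdef
  have hgl : LipschitzOnWith (1 + L) g (Set.Icc 0 T) :=
    (LipschitzWith.id.lipschitzOnWith).sub hf
  have hP := aux_pitman_lip T hT (1 + L) g hgl
  have hid : LipschitzOnWith 1 (fun t : ℝ => t) (Set.Icc 0 T) :=
    LipschitzWith.id.lipschitzOnWith
  have hfinal : LipschitzOnWith (1 + (1 + L))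
      (fun t : ℝ => t - (g t - 2 * sInf (g '' Set.Icc 0 t))) (Set.Icc 0 T) :=
    hid.sub hP
  have heq : (fun t : ℝ => f t + 2 * sInf ((fun s => s - f s) '' Set.Icc 0 t)) =
      fun t : ℝ => t - (g t - 2 * sInf (g '' Set.Icc 0 t)) := by
    funext t; simp only [hgdef]; ring
  rw [heq, show (L + 2 : NNReal) = 1 + (1 + L) from by ring]
  exact hfinal
end

section
/- Let μ ∈ (0,1), let (ε_n)_{n≥0} be independent exponential random variables with parameter 1, and for k ≥ 1 set ξ_k = k ∑_{n=k}^∞ 2ε_n/(n(n+1) + (1-2μ)ν_n), where ν_n = n for n even and ν_n = -(n+1) for n odd. Then each ξ_k is almost surely finite and ξ_k → 2 almost surely as k → ∞. -/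
open Filter MeasureTheory ProbabilityTheory

/-- `ν n = n` for `n` even, `-(n+1)` for `n` odd. -/
noncomputable def nu (n : ℕ) : ℝ := if Even n then (n : ℝ) else -((n : ℝ) + 1)

open Finset Topology
open scoped ENNReal NNReal

noncomputable def aa (μ : ℝ) (n : ℕ) : ℝ := (n : ℝ) * ((n : ℝ) + 1) + (1 - 2 * μ) * nu n

noncomputable def ww (μ : ℝ) (m : ℕ) : ℝ := 2 / aa μ m

lemma nu_abs_le (n : ℕ) : |nu n| ≤ (n : ℝ) + 1 := by
  have h : (0:ℝ) ≤ (n:ℝ) := Nat.cast_nonneg n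
  unfold nu
  split_ifs
  · rw [abs_of_nonneg h]; linarith
  · rw [abs_of_nonpos (by linarith)]; linarith

lemma aa_lower {μ : ℝ} (hμ0 : 0 < μ) (hμ1 : μ < 1) {n : ℕ} (hn : 1 ≤ n) :
    μ * (n : ℝ) ^ 2 ≤ aa μ n := by
  have h1 : (1 : ℝ) ≤ (n : ℝ) := by exact_mod_cast hn
  unfold aa nu
  split_ifs
  · nlinarith
  · nlinarith [mul_pos hμ0 (by linarith : (0:ℝ) < (n:ℝ)),
      mul_nonneg (by linarith : (0:ℝ) ≤ 1 - μ) (by nlinarith : (0:ℝ) ≤ (n:ℝ)^2 - 1)]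

lemma aa_pos {μ : ℝ} (hμ0 : 0 < μ) (hμ1 : μ < 1) {n : ℕ} (hn : 1 ≤ n) : 0 < aa μ n := by
  have h1 : (1 : ℝ) ≤ (n : ℝ) := by exact_mod_cast hn
  have := aa_lower hμ0 hμ1 hn
  have h2 : (0:ℝ) < μ * (n:ℝ)^2 := by positivity
  linarith

lemma one_sub_two_mu_abs {μ : ℝ} (hμ0 : 0 < μ) (hμ1 : μ < 1) : |1 - 2 * μ| ≤ 1 := by
  rw [abs_le]; constructor <;> linarith

lemma aa_sub {μ : ℝ} (hμ0 : 0 < μ) (hμ1 : μ < 1) (n : ℕ) :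
    |aa μ n - (n : ℝ) * ((n : ℝ) + 1)| ≤ (n : ℝ) + 1 := by
  unfold aa
  have h := nu_abs_le n
  have h2 := one_sub_two_mu_abs hμ0 hμ1
  calc |((n:ℝ) * ((n:ℝ)+1) + (1 - 2*μ) * nu n) - (n:ℝ) * ((n:ℝ)+1)| = |(1-2*μ)| * |nu n| := by
        rw [add_sub_cancel_left, abs_mul]
    _ ≤ 1 * ((n:ℝ)+1) := by
        apply mul_le_mul h2 h (abs_nonneg _) zero_le_one
    _ = (n:ℝ) + 1 := one_mul _

lemma aa_diff {μ : ℝ} (hμ0 : 0 < μ) (hμ1 : μ < 1) (m : ℕ) :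
    |aa μ (m + 1) - aa μ m| ≤ 5 * ((m : ℝ) + 1) := by
  have h1 := aa_sub hμ0 hμ1 (m + 1)
  have h2 := aa_sub hμ0 hμ1 m
  have hc : ((m + 1 : ℕ) : ℝ) = (m : ℝ) + 1 := by push_cast; ring
  rw [hc] at h1
  have h0 : (0:ℝ) ≤ (m:ℝ) := Nat.cast_nonneg m
  have t1 : aa μ (m+1) - ((m:ℝ)+1) * (((m:ℝ)+1)+1) ≤ ((m:ℝ)+1)+1 := (abs_le.1 h1).2
  have t1' : -(((m:ℝ)+1)+1) ≤ aa μ (m+1) - ((m:ℝ)+1) * (((m:ℝ)+1)+1) := (abs_le.1 h1).1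
  have t2 : aa μ m - (m:ℝ) * ((m:ℝ)+1) ≤ (m:ℝ)+1 := (abs_le.1 h2).2
  have t2' : -((m:ℝ)+1) ≤ aa μ m - (m:ℝ) * ((m:ℝ)+1) := (abs_le.1 h2).1
  rw [abs_le]
  constructor <;> nlinarith

lemma ww_nonneg {μ : ℝ} (hμ0 : 0 < μ) (hμ1 : μ < 1) {m : ℕ} (hm : 1 ≤ m) : 0 ≤ ww μ m :=
  div_nonneg (by norm_num) (aa_pos hμ0 hμ1 hm).le

lemma ww_le {μ : ℝ} (hμ0 : 0 < μ) (hμ1 : μ < 1) {m : ℕ} (hm : 1 ≤ m) :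
    ww μ m ≤ 2 / (μ * (m : ℝ) ^ 2) := by
  have h1 : (1 : ℝ) ≤ (m : ℝ) := by exact_mod_cast hm
  apply div_le_div_of_nonneg_left (by norm_num) (by positivity) (aa_lower hμ0 hμ1 hm)

lemma ww_diff {μ : ℝ} (hμ0 : 0 < μ) (hμ1 : μ < 1) {m : ℕ} (hm : 1 ≤ m) :
    |ww μ m - ww μ (m + 1)| ≤ 10 / (μ ^ 2 * (m : ℝ) ^ 2 * ((m : ℝ) + 1)) := by
  have h1 : (1 : ℝ) ≤ (m : ℝ) := by exact_mod_cast hm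
  have hham : 0 < aa μ m := aa_pos hμ0 hμ1 hm
  have hham1 : 0 < aa μ (m+1) := aa_pos hμ0 hμ1 (by omega)
  have hlow : μ * (m:ℝ)^2 ≤ aa μ m := aa_lower hμ0 hμ1 hm
  have hlow1 : μ * ((m:ℝ)+1)^2 ≤ aa μ (m+1) := by
    have := aa_lower hμ0 hμ1 (n := m+1) (by omega)
    have hc : ((m + 1 : ℕ) : ℝ) = (m : ℝ) + 1 := by push_cast; ring
    rwa [hc] at this
  have key : ww μ m - ww μ (m+1) = 2 * (aa μ (m+1) - aa μ m) / (aa μ m * aa μ (m+1)) := by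
    unfold ww; field_simp
  rw [key, abs_div, abs_mul]
  rw [abs_of_pos (by positivity : (0:ℝ) < aa μ m * aa μ (m+1))]
  have hnum : |(2:ℝ)| * |aa μ (m+1) - aa μ m| ≤ 10 * ((m:ℝ)+1) := by
    rw [abs_of_nonneg (by norm_num : (0:ℝ) ≤ 2)]
    have := aa_diff hμ0 hμ1 m
    linarith
  have hden : μ^2 * (m:ℝ)^2 * ((m:ℝ)+1) * ((m:ℝ)+1) ≤ aa μ m * aa μ (m+1) := by
    have e1 : (0:ℝ) < μ * (m:ℝ)^2 := by positivity
    have e2 : (0:ℝ) < μ * ((m:ℝ)+1)^2 := by positivity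
    calc μ^2 * (m:ℝ)^2 * ((m:ℝ)+1) * ((m:ℝ)+1) = (μ * (m:ℝ)^2) * (μ * ((m:ℝ)+1)^2) := by ring
      _ ≤ aa μ m * aa μ (m+1) := by
          apply mul_le_mul hlow hlow1 e2.le hham.le
  calc |(2:ℝ)| * |aa μ (m+1) - aa μ m| / (aa μ m * aa μ (m+1))
      ≤ 10 * ((m:ℝ)+1) / (μ^2 * (m:ℝ)^2 * ((m:ℝ)+1) * ((m:ℝ)+1)) := by
        apply div_le_div₀ (by positivity) hnum (by positivity) hden
    _ = 10 / (μ^2 * (m:ℝ)^2 * ((m:ℝ)+1)) := by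
        field_simp

lemma sum_Ico_telescope (g : ℕ → ℝ) {k K : ℕ} (h : k ≤ K) :
    ∑ m ∈ Ico k K, (g m - g (m + 1)) = g k - g K := by
  induction K, h using Nat.le_induction with
  | base => simp
  | succ K hK ih => rw [Finset.sum_Ico_succ_top hK, ih]; ring

lemma abel_Ico (u s : ℕ → ℝ) {k K : ℕ} (h : k ≤ K) :
    ∑ m ∈ Ico k K, u m * (s (m + 1) - s m)
      = u K * s K - u k * s k + ∑ m ∈ Ico k K, (u m - u (m + 1)) * s (m + 1) := by
  induction K, h using Nat.le_induction with
  | base => simp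
  | succ K hK ih => rw [Finset.sum_Ico_succ_top hK, Finset.sum_Ico_succ_top hK, ih]; ring

lemma abel_bound {μ : ℝ} (hμ0 : 0 < μ) (hμ1 : μ < 1) (s : ℕ → ℝ) (D : ℝ) (hD : 0 ≤ D)
    {k K : ℕ} (hk : 1 ≤ k) (hkK : k ≤ K)
    (hs : ∀ j, k ≤ j → |s j| ≤ D * ((j : ℝ) + 1)) :
    |∑ m ∈ Ico k K, ww μ m * (s (m + 1) - s m)| ≤ (8 / μ + 40 / μ ^ 2) * D / k := by
  have hK1 : 1 ≤ K := le_trans hk hkK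
  have hkc : (1:ℝ) ≤ (k:ℝ) := by exact_mod_cast hk
  have hKc : (1:ℝ) ≤ (K:ℝ) := by exact_mod_cast hK1
  have hkKc : (k:ℝ) ≤ (K:ℝ) := by exact_mod_cast hkK
  rw [abel_Ico _ _ hkK]
  -- bound for |ww μ j * s j| for j ≥ k
  have hend : ∀ j : ℕ, k ≤ j → |ww μ j * s j| ≤ 4 * D / (μ * k) := by
    intro j hj
    have hj1 : 1 ≤ j := le_trans hk hj
    have hjc : (1:ℝ) ≤ (j:ℝ) := by exact_mod_cast hj1
    have hjk : (k:ℝ) ≤ (j:ℝ) := by exact_mod_cast hj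
    have h1 : |ww μ j * s j| = ww μ j * |s j| := by
      rw [abs_mul, abs_of_nonneg (ww_nonneg hμ0 hμ1 hj1)]
    rw [h1]
    calc ww μ j * |s j| ≤ (2 / (μ * (j:ℝ)^2)) * (D * ((j:ℝ)+1)) := by
          apply mul_le_mul (ww_le hμ0 hμ1 hj1) (hs j hj) (abs_nonneg _)
          positivity
      _ ≤ 4 * D / (μ * k) := by
          rw [div_mul_eq_mul_div, div_le_div_iff₀ (by positivity) (by positivity)]
          nlinarith [mul_nonneg hD (by positivity : (0:ℝ) ≤ μ * (j:ℝ)), mul_nonneg hD hμ0.le,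
            mul_nonneg (mul_nonneg hD hμ0.le) (by nlinarith : (0:ℝ) ≤ ((j:ℝ) - (k:ℝ)) * (j:ℝ))]
  have hmid : |∑ m ∈ Ico k K, (ww μ m - ww μ (m+1)) * s (m+1)| ≤ 40 * D / μ^2 * (1/k) := by
    calc |∑ m ∈ Ico k K, (ww μ m - ww μ (m+1)) * s (m+1)|
        ≤ ∑ m ∈ Ico k K, |(ww μ m - ww μ (m+1)) * s (m+1)| := Finset.abs_sum_le_sum_abs _ _
      _ ≤ ∑ m ∈ Ico k K, (40 * D / μ^2) * (1/(m:ℝ) - 1/((m:ℝ)+1)) := by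
          apply Finset.sum_le_sum
          intro m hm
          obtain ⟨hkm, _⟩ := Finset.mem_Ico.1 hm
          have hm1 : 1 ≤ m := le_trans hk hkm
          have hmc : (1:ℝ) ≤ (m:ℝ) := by exact_mod_cast hm1
          have hsm : |s (m+1)| ≤ D * ((m:ℝ) + 2) := by
            have := hs (m+1) (by omega)
            have hc : ((m+1:ℕ):ℝ) = (m:ℝ)+1 := by push_cast; ring
            rw [hc] at this
            linarith [this]
          rw [abs_mul]
          calc |ww μ m - ww μ (m+1)| * |s (m+1)|
              ≤ (10 / (μ^2 * (m:ℝ)^2 * ((m:ℝ)+1))) * (D * ((m:ℝ)+2)) := by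
                apply mul_le_mul (ww_diff hμ0 hμ1 hm1) hsm (abs_nonneg _) (by positivity)
            _ ≤ (40 * D / μ^2) * (1/(m:ℝ) - 1/((m:ℝ)+1)) := by
                have hrw : 1/(m:ℝ) - 1/((m:ℝ)+1) = 1/((m:ℝ)*((m:ℝ)+1)) := by
                  field_simp
                  ring
                have hrw2 : (40 * D / μ^2) * (1/((m:ℝ)*((m:ℝ)+1))) = 40*D / (μ^2*((m:ℝ)*((m:ℝ)+1))) := by
                  field_simp
                rw [hrw, hrw2, div_mul_eq_mul_div, div_le_div_iff₀ (by positivity) (by positivity)]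
                nlinarith [mul_nonneg (mul_nonneg (mul_nonneg hD (sq_nonneg μ)) (by positivity : (0:ℝ) ≤ (m:ℝ)+1)) (by nlinarith : (0:ℝ) ≤ (m:ℝ)*(3*(m:ℝ)-2))]
      _ = (40 * D / μ^2) * (1/(k:ℝ) - 1/(K:ℝ)) := by
          rw [← Finset.mul_sum]
          congr 1
          have tel := sum_Ico_telescope (fun j : ℕ => 1/(j:ℝ)) hkK
          push_cast at tel
          convert tel using 2

      _ ≤ 40 * D / μ^2 * (1/k) := by
          have h0 : (0:ℝ) ≤ 40 * D / μ^2 := by positivity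
          have h1 : (0:ℝ) ≤ 1/(K:ℝ) := by positivity
          nlinarith
  calc |ww μ K * s K - ww μ k * s k + ∑ m ∈ Ico k K, (ww μ m - ww μ (m+1)) * s (m+1)|
      ≤ |ww μ K * s K| + |ww μ k * s k| + |∑ m ∈ Ico k K, (ww μ m - ww μ (m+1)) * s (m+1)| := by
        apply (abs_add_le _ _).trans
        apply add_le_add_left
        exact abs_sub _ _
    _ ≤ 4 * D / (μ * k) + 4 * D / (μ * k) + 40 * D / μ^2 * (1/k) := by
        apply add_le_add (add_le_add (hend K hkK) (hend k le_rfl)) hmid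
    _ = (8 / μ + 40 / μ ^ 2) * D / k := by
        field_simp
        ring

lemma sum_shift_eq (μ : ℝ) (y : ℕ → ℝ) (k N : ℕ) :
    ∑ n ∈ range N, ww μ (n + k) * y (n + k) = ∑ m ∈ Ico k (k + N), ww μ m * y m := by
  rw [Finset.sum_Ico_eq_sum_range]
  simp only [Nat.add_sub_cancel_left]
  apply Finset.sum_congr rfl
  intro i _
  rw [add_comm k i]

lemma summable_ww_mul {μ : ℝ} (hμ0 : 0 < μ) (hμ1 : μ < 1) (x : ℕ → ℝ)
    (hx0 : ∀ n, 0 ≤ x n) (C : ℝ) (hC : 0 ≤ C)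
    (hSb : ∀ j : ℕ, |∑ i ∈ range j, x i| ≤ C * ((j : ℝ) + 1)) {k : ℕ} (hk : 1 ≤ k) :
    Summable (fun n => ww μ (n + k) * x (n + k)) := by
  apply summable_of_sum_range_le (c := (8 / μ + 40 / μ ^ 2) * C / k)
  · intro n
    exact mul_nonneg (ww_nonneg hμ0 hμ1 (by omega)) (hx0 _)
  · intro N
    rw [sum_shift_eq]
    have hre : ∑ m ∈ Ico k (k + N), ww μ m * x m
        = ∑ m ∈ Ico k (k + N), ww μ m * ((∑ i ∈ range (m+1), x i) - ∑ i ∈ range m, x i) := by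
      apply Finset.sum_congr rfl
      intro m _
      rw [Finset.sum_range_succ]
      ring
    rw [hre]
    have hb := abel_bound hμ0 hμ1 (fun j => ∑ i ∈ range j, x i) C hC hk
      (Nat.le_add_right k N) (fun j _ => hSb j)
    exact (le_abs_self _).trans hb

lemma tsum_abs_bound {μ : ℝ} (hμ0 : 0 < μ) (hμ1 : μ < 1) (y s : ℕ → ℝ) (D : ℝ) (hD : 0 ≤ D)
    {k : ℕ} (hk : 1 ≤ k) (hys : ∀ m, y m = s (m + 1) - s m)
    (hs : ∀ j, k ≤ j → |s j| ≤ D * ((j : ℝ) + 1))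
    (hsum : Summable (fun n => ww μ (n + k) * y (n + k))) :
    |∑' n, ww μ (n + k) * y (n + k)| ≤ (8 / μ + 40 / μ ^ 2) * D / k := by
  apply le_of_tendsto hsum.hasSum.tendsto_sum_nat.abs
  filter_upwards with N
  rw [sum_shift_eq]
  have hre : ∑ m ∈ Ico k (k + N), ww μ m * y m
      = ∑ m ∈ Ico k (k + N), ww μ m * (s (m+1) - s m) := by
    apply Finset.sum_congr rfl
    intro m _
    rw [hys m]
  rw [hre]
  exact abel_bound hμ0 hμ1 s D hD hk (Nat.le_add_right k N) hs

lemma tele_hasSum {k : ℕ} (hk : 1 ≤ k) :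
    HasSum (fun n : ℕ => 1 / ((n + k : ℕ) : ℝ) - 1 / (((n + k : ℕ) : ℝ) + 1)) (1 / (k : ℝ)) := by
  have hnn : ∀ n : ℕ, 0 ≤ 1 / ((n + k : ℕ) : ℝ) - 1 / (((n + k : ℕ) : ℝ) + 1) := by
    intro n
    have h1' : 1 ≤ n + k := by omega
    have h1 : (1:ℝ) ≤ ((n + k : ℕ) : ℝ) := by exact_mod_cast h1'
    have := one_div_le_one_div_of_le (by linarith : (0:ℝ) < ((n + k : ℕ) : ℝ))
      (by linarith : ((n + k : ℕ) : ℝ) ≤ ((n + k : ℕ) : ℝ) + 1)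
    linarith
  rw [hasSum_iff_tendsto_nat_of_nonneg hnn]
  have heq : ∀ N : ℕ, ∑ n ∈ range N, (1 / ((n + k : ℕ) : ℝ) - 1 / (((n + k : ℕ) : ℝ) + 1))
      = 1 / ((0 + k : ℕ) : ℝ) - 1 / ((N + k : ℕ) : ℝ) := by
    intro N
    rw [← Finset.sum_range_sub' (f := fun n : ℕ => 1 / ((n + k : ℕ) : ℝ))]
    apply Finset.sum_congr rfl
    intro n _
    push_cast
    ring_nf
  simp only [heq]
  have h2 : Tendsto (fun N : ℕ => 1 / ((N + k : ℕ) : ℝ)) atTop (𝓝 0) := by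
    simp only [one_div]
    apply Tendsto.inv_tendsto_atTop
    exact tendsto_natCast_atTop_atTop.comp (tendsto_add_atTop_nat k)
  have h3 := (tendsto_const_nhds (x := 1 / ((0 + k : ℕ) : ℝ)) (f := atTop (α := ℕ))).sub h2
  simpa using h3

lemma ww_near {μ : ℝ} (hμ0 : 0 < μ) (hμ1 : μ < 1) {k m : ℕ} (hk : 1 ≤ k) (hm : k ≤ m) :
    |ww μ m - 2 * (1 / (m:ℝ) - 1 / ((m:ℝ) + 1))| ≤ (4 / (μ * k)) * (1 / (m:ℝ) - 1 / ((m:ℝ) + 1)) := by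
  have hm1 : 1 ≤ m := le_trans hk hm
  have hmc : (1:ℝ) ≤ (m:ℝ) := by exact_mod_cast hm1
  have hkc : (1:ℝ) ≤ (k:ℝ) := by exact_mod_cast hk
  have hkm : (k:ℝ) ≤ (m:ℝ) := by exact_mod_cast hm
  have hA : 0 < aa μ m := aa_pos hμ0 hμ1 hm1
  have hlow : μ * (m:ℝ)^2 ≤ aa μ m := aa_lower hμ0 hμ1 hm1
  have hrw : 1/(m:ℝ) - 1/((m:ℝ)+1) = 1/((m:ℝ)*((m:ℝ)+1)) := by field_simp; ring
  have key : ww μ m - 2 * (1/(m:ℝ) - 1/((m:ℝ)+1))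
      = 2 * ((m:ℝ)*((m:ℝ)+1) - aa μ m) / (aa μ m * ((m:ℝ)*((m:ℝ)+1))) := by
    rw [hrw]
    unfold ww
    field_simp
  rw [key, hrw, abs_div, abs_mul]
  rw [abs_of_pos (by positivity : (0:ℝ) < aa μ m * ((m:ℝ)*((m:ℝ)+1)))]
  have hnum : |(2:ℝ)| * |(m:ℝ)*((m:ℝ)+1) - aa μ m| ≤ 2 * ((m:ℝ)+1) := by
    rw [abs_of_nonneg (by norm_num : (0:ℝ) ≤ 2)]
    have := aa_sub hμ0 hμ1 m
    rw [abs_sub_comm] at this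
    linarith
  have hfin : (4 / (μ * k)) * (1/((m:ℝ)*((m:ℝ)+1))) = 4 / (μ * (k:ℝ) * ((m:ℝ)*((m:ℝ)+1))) := by
    field_simp
  rw [hfin]
  rw [div_le_div_iff₀ (by positivity) (by positivity)]
  have e0 : (0:ℝ) ≤ (m:ℝ)*((m:ℝ)+1) := by positivity
  have e1 := mul_le_mul_of_nonneg_right hlow e0
  have ha : (0:ℝ) ≤ μ*(m:ℝ)*((m:ℝ)+1)*(((m:ℝ)+1)*((m:ℝ)-(k:ℝ))) := by
    apply mul_nonneg (by positivity)
    apply mul_nonneg (by positivity)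
    linarith
  have hb : (0:ℝ) ≤ μ*(m:ℝ)*((m:ℝ)+1)*((m:ℝ)^2-(m:ℝ)) := by
    apply mul_nonneg (by positivity)
    nlinarith
  nlinarith [hnum, mul_le_mul_of_nonneg_right hnum (by positivity : (0:ℝ) ≤ μ * (k:ℝ) * ((m:ℝ)*((m:ℝ)+1))), e1, ha, hb]

lemma det_limit {μ : ℝ} (hμ0 : 0 < μ) (hμ1 : μ < 1) :
    Tendsto (fun k : ℕ => (k : ℝ) * ∑' n : ℕ, ww μ (n + k)) atTop (𝓝 2) := by
  have key : ∀ k : ℕ, 1 ≤ k → |(k : ℝ) * ∑' n : ℕ, ww μ (n + k) - 2| ≤ 4 / (μ * k) := by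
    intro k hk
    have hkc : (1:ℝ) ≤ (k:ℝ) := by exact_mod_cast hk
    set tele : ℕ → ℝ := fun n => 1 / ((n + k : ℕ) : ℝ) - 1 / (((n + k : ℕ) : ℝ) + 1) with htele_def
    have htele : HasSum tele (1 / (k:ℝ)) := tele_hasSum hk
    have htele2 : HasSum (fun n => 2 * tele n) (2 * (1 / (k:ℝ))) := htele.mul_left 2
    set d : ℕ → ℝ := fun n => ww μ (n + k) - 2 * tele n with hd_def
    have hdb : ∀ n, |d n| ≤ (4 / (μ * k)) * tele n := by
      intro n
      exact ww_near hμ0 hμ1 hk (Nat.le_add_left k n)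
    have hdsum : Summable d := by
      apply Summable.of_norm_bounded (g := fun n => (4 / (μ * k)) * tele n) (htele.summable.mul_left _)
      intro n
      rw [Real.norm_eq_abs]
      exact hdb n
    have hwsum : Summable (fun n => ww μ (n + k)) := by
      have := hdsum.add htele2.summable
      convert this using 2 with n
      simp only [hd_def]
      ring
    have htsum : ∑' n : ℕ, ww μ (n + k) = (∑' n, d n) + 2 * (1 / (k:ℝ)) := by
      have he : (fun n : ℕ => ww μ (n + k)) = fun n => d n + 2 * tele n := by
        funext n
        simp only [hd_def]
        ring
      rw [he, Summable.tsum_add hdsum htele2.summable, htele2.tsum_eq]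
    have habs_sum : Summable (fun n => |d n|) := hdsum.abs
    have hdabs : |∑' n, d n| ≤ (4 / (μ * k)) * (1 / (k:ℝ)) := by
      calc |∑' n, d n| ≤ ∑' n, |d n| := by
            simpa [Real.norm_eq_abs] using norm_tsum_le_tsum_norm (f := d) (by simpa [Real.norm_eq_abs] using habs_sum)
        _ ≤ ∑' n, (4 / (μ * k)) * tele n := Summable.tsum_le_tsum hdb habs_sum (htele.summable.mul_left _)
        _ = (4 / (μ * k)) * (1 / (k:ℝ)) := (htele.mul_left _).tsum_eq
    rw [htsum]
    have hkne : (k:ℝ) ≠ 0 := by linarith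
    have he2 : (k:ℝ) * ((∑' n, d n) + 2 * (1 / (k:ℝ))) - 2 = (k:ℝ) * (∑' n, d n) := by
      field_simp
      ring
    rw [he2, abs_mul, abs_of_nonneg (by linarith : (0:ℝ) ≤ (k:ℝ))]
    calc (k:ℝ) * |∑' n, d n| ≤ (k:ℝ) * ((4 / (μ * k)) * (1 / (k:ℝ))) := by
          apply mul_le_mul_of_nonneg_left hdabs (by linarith)
      _ = 4 / (μ * k) := by
          field_simp
  have h0 : Tendsto (fun k : ℕ => (k : ℝ) * (∑' n : ℕ, ww μ (n + k)) - 2) atTop (𝓝 0) := by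
    refine squeeze_zero_norm' (a := fun k : ℕ => (4 / μ) / (k:ℝ)) ?_ ?_
    · filter_upwards [eventually_ge_atTop 1] with k hk
      rw [Real.norm_eq_abs]
      have := key k hk
      have hkc : (0:ℝ) < (k:ℝ) := by exact_mod_cast hk
      have : 4 / (μ * (k:ℝ)) = (4 / μ) / (k:ℝ) := by field_simp
      rw [← this]
      exact key k hk
    · exact tendsto_const_div_atTop_nhds_zero_nat (4 / μ)
  have := h0.add_const 2
  simpa using this

lemma core_lemma {μ : ℝ} (hμ0 : 0 < μ) (hμ1 : μ < 1) (x : ℕ → ℝ) (hx0 : ∀ n, 0 ≤ x n)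
    (hS : Tendsto (fun N : ℕ => (∑ i ∈ range N, x i) / (N : ℝ)) atTop (𝓝 1)) :
    (∀ k : ℕ, 1 ≤ k → Summable (fun n : ℕ => ww μ (n + k) * x (n + k))) ∧
    Tendsto (fun k : ℕ => (k : ℝ) * ∑' n : ℕ, ww μ (n + k) * x (n + k)) atTop (𝓝 2) := by
  set S : ℕ → ℝ := fun N => ∑ i ∈ range N, x i with hS_def
  have h0 : Tendsto (fun N : ℕ => S N / (N : ℝ) - 1) atTop (𝓝 0) := by
    simpa using hS.sub_const 1
  have hdelta : ∀ δ : ℝ, 0 < δ → ∃ M : ℕ, 1 ≤ M ∧ ∀ j, M ≤ j → |S j - (j:ℝ)| ≤ δ * ((j:ℝ) + 1) := by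
    intro δ hδ
    have h1 := NormedAddCommGroup.tendsto_nhds_zero.1 h0 δ hδ
    obtain ⟨M0, hM0⟩ := eventually_atTop.1 h1
    refine ⟨max M0 1, le_max_right _ 1, ?_⟩
    intro j hj
    have hj1 : 1 ≤ j := le_trans (le_max_right M0 1) hj
    have hjc : (1:ℝ) ≤ (j:ℝ) := by exact_mod_cast hj1
    have hjne : (j:ℝ) ≠ 0 := by linarith
    have h2 := hM0 j (le_trans (le_max_left M0 1) hj)
    rw [Real.norm_eq_abs] at h2
    have h3 : S j - (j:ℝ) = (S j / (j:ℝ) - 1) * (j:ℝ) := by field_simp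
    rw [h3, abs_mul, abs_of_nonneg (by linarith : (0:ℝ) ≤ (j:ℝ))]
    calc |S j / (j:ℝ) - 1| * (j:ℝ) ≤ δ * (j:ℝ) := by
          apply mul_le_mul_of_nonneg_right h2.le (by linarith)
      _ ≤ δ * ((j:ℝ) + 1) := by nlinarith
  obtain ⟨M1, hM11, hM1⟩ := hdelta 1 one_pos
  set C : ℝ := |S M1| + 2 with hC_def
  have hC2 : (2:ℝ) ≤ C := by
    have := abs_nonneg (S M1); simp only [hC_def]; linarith
  have hC : 0 ≤ C := by linarith
  have hSnn : ∀ j, 0 ≤ S j := fun j => Finset.sum_nonneg (fun i _ => hx0 i)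
  have hSb : ∀ j : ℕ, |S j| ≤ C * ((j:ℝ) + 1) := by
    intro j
    have hj1 : (0:ℝ) ≤ (j:ℝ) := Nat.cast_nonneg j
    rcases le_or_gt M1 j with hj | hj
    · have h2 := hM1 j hj
      have : |S j| ≤ |S j - (j:ℝ)| + (j:ℝ) := by
        have := abs_add_le (S j - (j:ℝ)) ((j:ℝ))
        simp only [sub_add_cancel] at this
        calc |S j| ≤ |S j - (j:ℝ)| + |(j:ℝ)| := this
          _ = |S j - (j:ℝ)| + (j:ℝ) := by rw [abs_of_nonneg hj1]
      calc |S j| ≤ |S j - (j:ℝ)| + (j:ℝ) := this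
        _ ≤ 1 * ((j:ℝ)+1) + (j:ℝ) := by linarith [h2]
        _ ≤ C * ((j:ℝ)+1) := by nlinarith
    · have hmono : S j ≤ S M1 := by
        apply Finset.sum_le_sum_of_subset_of_nonneg
        · exact Finset.range_subset_range.2 hj.le
        · intro i _ _; exact hx0 i
      rw [abs_of_nonneg (hSnn j)]
      calc S j ≤ S M1 := hmono
        _ ≤ |S M1| := le_abs_self _
        _ ≤ C := by simp only [hC_def]; linarith
        _ ≤ C * ((j:ℝ)+1) := by nlinarith
  have hsum : ∀ k : ℕ, 1 ≤ k → Summable (fun n : ℕ => ww μ (n + k) * x (n + k)) :=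
    fun k hk => summable_ww_mul hμ0 hμ1 x hx0 C hC hSb hk
  refine ⟨hsum, ?_⟩
  have hW : ∀ k : ℕ, 1 ≤ k → Summable (fun n : ℕ => ww μ (n + k)) := by
    intro k hk
    have h1 : ∀ j : ℕ, |∑ i ∈ range j, (1:ℝ)| ≤ 1 * ((j:ℝ) + 1) := by
      intro j
      simp only [Finset.sum_const, Finset.card_range, nsmul_eq_mul, mul_one]
      rw [abs_of_nonneg (Nat.cast_nonneg j)]
      have : (0:ℝ) ≤ (j:ℝ) := Nat.cast_nonneg j
      linarith
    have := summable_ww_mul hμ0 hμ1 (fun _ => (1:ℝ)) (fun _ => zero_le_one) 1 zero_le_one h1 hk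
    simpa using this
  have hdiff0 : Tendsto (fun k : ℕ => (k:ℝ) * (∑' n : ℕ, ww μ (n + k) * x (n + k))
      - (k:ℝ) * (∑' n : ℕ, ww μ (n + k))) atTop (𝓝 0) := by
    rw [NormedAddCommGroup.tendsto_nhds_zero]
    intro ε hε
    set Cg : ℝ := 8 / μ + 40 / μ ^ 2 with hCg_def
    have hCgpos : 0 < Cg := by positivity
    set δ : ℝ := ε / (2 * Cg) with hδ_def
    have hδ : 0 < δ := by positivity
    obtain ⟨M, hMge1, hM⟩ := hdelta δ hδ
    filter_upwards [eventually_ge_atTop M, eventually_ge_atTop 1] with k hkM hk1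
    have hkc : (1:ℝ) ≤ (k:ℝ) := by exact_mod_cast hk1
    set y : ℕ → ℝ := fun m => x m - 1 with hy_def
    set s : ℕ → ℝ := fun j => S j - (j:ℝ) with hs_def
    have hys : ∀ m, y m = s (m + 1) - s m := by
      intro m
      simp only [hy_def, hs_def, hS_def, Finset.sum_range_succ]
      push_cast
      ring
    have hsb : ∀ j, k ≤ j → |s j| ≤ δ * ((j:ℝ) + 1) := fun j hj => hM j (le_trans hkM hj)
    have hsum_y : Summable (fun n : ℕ => ww μ (n + k) * y (n + k)) := by
      have := (hsum k hk1).sub (hW k hk1)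
      convert this using 2 with n
      show ww μ (n + k) * (x (n + k) - 1) = ww μ (n + k) * x (n + k) - ww μ (n + k)
      ring
      rfl
    have htb := tsum_abs_bound hμ0 hμ1 y s δ hδ.le hk1 hys hsb hsum_y
    have hts : (∑' n : ℕ, ww μ (n + k) * x (n + k)) - (∑' n : ℕ, ww μ (n + k))
        = ∑' n : ℕ, ww μ (n + k) * y (n + k) := by
      rw [← Summable.tsum_sub (hsum k hk1) (hW k hk1)]
      apply tsum_congr
      intro n
      simp only [hy_def]
      ring
    rw [Real.norm_eq_abs, ← mul_sub, hts, abs_mul, abs_of_nonneg (by linarith : (0:ℝ) ≤ (k:ℝ))]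
    calc (k:ℝ) * |∑' n : ℕ, ww μ (n + k) * y (n + k)| ≤ (k:ℝ) * (Cg * δ / (k:ℝ)) := by
          apply mul_le_mul_of_nonneg_left htb (by linarith)
      _ = Cg * δ := by field_simp
      _ = ε / 2 := by
          simp only [hδ_def]
          field_simp
      _ < ε := by linarith
  have hcomb := hdiff0.add (det_limit hμ0 hμ1)
  simp only [zero_add] at hcomb
  convert hcomb using 2 with k
  ring

lemma gammaPDFReal_one_one (x : ℝ) :
    gammaPDFReal 1 1 x = if 0 ≤ x then Real.exp (-x) else 0 := by
  unfold gammaPDFReal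
  simp [Real.Gamma_one, Real.rpow_zero]

lemma exp_mean_integrand :
    (fun x : ℝ => x * (ENNReal.ofReal (gammaPDFReal 1 1 x)).toReal)
      = Set.indicator (Set.Ici 0) (fun x => x * Real.exp (-x)) := by
  funext x
  have h1 : (ENNReal.ofReal (gammaPDFReal 1 1 x)).toReal = gammaPDFReal 1 1 x :=
    ENNReal.toReal_ofReal (gammaPDFReal_nonneg one_pos one_pos x)
  rw [h1, gammaPDFReal_one_one]
  by_cases hx : 0 ≤ x
  · rw [if_pos hx, Set.indicator_of_mem (Set.mem_Ici.2 hx)]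
  · rw [if_neg hx, Set.indicator_of_notMem (by simpa using hx), mul_zero]

lemma exp_integrableOn : MeasureTheory.IntegrableOn (fun x : ℝ => x * Real.exp (-x)) (Set.Ici 0) := by
  rw [integrableOn_Ici_iff_integrableOn_Ioi]
  have h := Real.GammaIntegral_convergent (s := 2) (by norm_num)
  apply h.congr_fun ?_ measurableSet_Ioi
  intro x hx
  simp only [show ((2:ℝ)-1) = 1 from by norm_num, Real.rpow_one]
  ring

lemma exp_integrable_id : Integrable id (expMeasure 1) := by
  have he : expMeasure 1
      = MeasureTheory.Measure.withDensity volume (fun x => ENNReal.ofReal (gammaPDFReal 1 1 x)) := rfl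
  rw [he, integrable_withDensity_iff ((measurable_gammaPDFReal 1 1).ennreal_ofReal)
    (ae_of_all _ fun x => ENNReal.ofReal_lt_top)]
  simp only [id_eq]
  rw [exp_mean_integrand]
  exact (integrable_indicator_iff measurableSet_Ici).2 exp_integrableOn

lemma exp_mean : ∫ x, x ∂(expMeasure 1) = 1 := by
  have he : expMeasure 1
      = MeasureTheory.Measure.withDensity volume (fun x => ((gammaPDFReal 1 1 x).toNNReal : ℝ≥0∞)) := rfl
  rw [he]
  rw [integral_withDensity_eq_integral_smul ((measurable_gammaPDFReal 1 1).real_toNNReal) (fun x => x)]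
  have hsm : (fun x : ℝ => (gammaPDFReal 1 1 x).toNNReal • x)
      = Set.indicator (Set.Ici 0) (fun x => x * Real.exp (-x)) := by
    rw [← exp_mean_integrand]
    funext x
    have h1 : (ENNReal.ofReal (gammaPDFReal 1 1 x)).toReal = gammaPDFReal 1 1 x :=
      ENNReal.toReal_ofReal (gammaPDFReal_nonneg one_pos one_pos x)
    rw [NNReal.smul_def, smul_eq_mul, Real.coe_toNNReal _ (gammaPDFReal_nonneg one_pos one_pos x), h1]
    ring
  rw [hsm, integral_indicator measurableSet_Ici, integral_Ici_eq_integral_Ioi]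
  have hcg : ∀ x ∈ Set.Ioi (0:ℝ), x * Real.exp (-x) = x ^ ((2:ℝ) - 1) * Real.exp (-(1 * x)) := by
    intro x hx
    have : (2:ℝ) - 1 = 1 := by norm_num
    rw [this, Real.rpow_one, one_mul]
  rw [setIntegral_congr_fun measurableSet_Ioi hcg,
    Real.integral_rpow_mul_exp_neg_mul_Ioi (by norm_num : (0:ℝ) < 2) one_pos]
  simp [Real.Gamma_two]

theorem string_parameters_tendsto_two
    {Ω : Type*} [MeasureSpace Ω] [IsProbabilityMeasure (ℙ : Measure Ω)]
    (μ : ℝ) (hμ0 : 0 < μ) (hμ1 : μ < 1)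
    (ε : ℕ → Ω → ℝ) (hmeas : ∀ n, Measurable (ε n))
    (hindep : iIndepFun ε ℙ)
    (hdist : ∀ n, Measure.map (ε n) ℙ = expMeasure 1) :
    ∀ᵐ ω : Ω,
      (∀ k : ℕ, 1 ≤ k →
        Summable (fun n : ℕ =>
          2 * ε (n + k) ω / ((n + k) * ((n + k : ℕ) + 1) + (1 - 2 * μ) * nu (n + k)))) ∧
      Tendsto (fun k : ℕ =>
          (k : ℝ) * ∑' n : ℕ,
            2 * ε (n + k) ω / ((n + k) * ((n + k : ℕ) + 1) + (1 - 2 * μ) * nu (n + k)))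
        atTop (nhds 2) := by
  have hint : Integrable (ε 0) ℙ := by
    have h1 : Integrable id (Measure.map (ε 0) ℙ) := by
      rw [hdist 0]; exact exp_integrable_id
    have h2 := (integrable_map_measure aestronglyMeasurable_id (hmeas 0).aemeasurable).1 h1
    simpa [Function.comp] using h2
  have hmean : ∫ ω, ε 0 ω ∂ℙ = 1 := by
    have h1 : ∫ x, id x ∂(Measure.map (ε 0) ℙ) = ∫ ω, id (ε 0 ω) ∂ℙ :=
      integral_map (hmeas 0).aemeasurable aestronglyMeasurable_id
    rw [hdist 0] at h1
    simp only [id_eq] at h1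
    rw [← h1]
    exact exp_mean
  have hident : ∀ i, IdentDistrib (ε i) (ε 0) ℙ ℙ := fun i =>
    ⟨(hmeas i).aemeasurable, (hmeas 0).aemeasurable, by rw [hdist i, hdist 0]⟩
  have hpair : Pairwise (Function.onFun (IndepFun · · ℙ) ε) := fun i j hij => hindep.indepFun hij
  have hslln := strong_law_ae_real ε hint hpair hident
  rw [hmean] at hslln
  have hnonneg : ∀ᵐ ω : Ω, ∀ n, 0 ≤ ε n ω := by
    rw [ae_all_iff]
    intro n
    have hz : ℙ (ε n ⁻¹' (Set.Iio 0)) = 0 := by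
      rw [← Measure.map_apply (hmeas n) measurableSet_Iio, hdist n]
      have he : expMeasure 1 (Set.Iio 0)
          = Measure.withDensity volume (gammaPDF 1 1) (Set.Iio 0) := rfl
      rw [he, withDensity_apply _ measurableSet_Iio]
      exact lintegral_gammaPDF_of_nonpos le_rfl
    rw [ae_iff]
    have hset : {a | ¬ 0 ≤ ε n a} = ε n ⁻¹' (Set.Iio 0) := by
      ext a; simp [not_le]
    rw [hset]
    exact hz
  filter_upwards [hslln, hnonneg] with ω h1 h2
  have hcore := core_lemma hμ0 hμ1 (fun n => ε n ω) h2 h1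
  constructor
  · intro k hk
    apply Summable.congr (hcore.1 k hk)
    intro n
    unfold ww aa
    push_cast
    ring
  · refine hcore.2.congr (fun k => ?_)
    congr 1
    apply tsum_congr
    intro n
    unfold ww aa
    push_cast
    ring
end
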